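/- arXiv:1611.01349 — 7 statements merged into one kernel-verified Lean document; each statement's English description precedes it below -/
import Mathlib

section
/- For natural numbers k ≤ l with l ≡ k (mod 2), ∫_{−π}^{π} cos(kx)·(cos x)^l dx = (2π/2^{l−k})·C(l−k, (l−k)/2)·∏_{i=0}^{k−1} (l−i)/(l+k−2i). -/
open Real Finset
open scoped Nat

open Complex in
lemma integral_exp_int_mul_I_aux (n : ℤ) :
    ∫ x in (-π)..π, Complex.exp (n * Complex.I * x) =
      if n = 0 then 2 * (π : ℂ) else 0 := by
  rcases eq_or_ne n 0 with h | h
  · rw [if_pos h]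
    simp only [h, Int.cast_zero, zero_mul, Complex.exp_zero]
    rw [intervalIntegral.integral_const]
    rw [sub_neg_eq_add, Complex.real_smul]
    push_cast
    ring
  · rw [if_neg h, integral_exp_mul_complex (by
      simp only [ne_eq, mul_eq_zero, Complex.I_ne_zero, or_false, Int.cast_eq_zero]
      exact h)]
    have he : Complex.exp ((n : ℂ) * I * (π : ℝ)) =
        Complex.exp ((n : ℂ) * I * ((-π : ℝ) : ℝ)) := by
      rw [Complex.exp_eq_exp_iff_exp_sub_eq_one]
      have : ((n : ℂ) * I * (π : ℝ) - (n : ℂ) * I * ((-π : ℝ) : ℝ)) =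
          (n : ℂ) * (2 * π * I) := by push_cast; ring
      rw [this, Complex.exp_int_mul_two_pi_mul_I]
    rw [he, sub_self, zero_div]

open Complex in
lemma cos_pow_expand (l : ℕ) (x : ℝ) :
    (Complex.cos x) ^ l =
      ∑ j ∈ range (l + 1), (l.choose j : ℂ) / 2 ^ l *
        Complex.exp ((2 * (j : ℤ) - l) * Complex.I * x) := by
  have h : Complex.cos x = (Complex.exp (x * I) + Complex.exp (-x * I)) / 2 := rfl
  rw [h, div_pow, add_pow, Finset.sum_div]
  refine Finset.sum_congr rfl fun j hj => ?_
  have hj' : j ≤ l := Nat.lt_succ_iff.mp (Finset.mem_range.mp hj)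
  rw [← Complex.exp_nat_mul, ← Complex.exp_nat_mul, ← Complex.exp_add]
  have harg : (j : ℂ) * ((x : ℂ) * I) + ((l - j : ℕ) : ℂ) * (-(x : ℂ) * I) =
      ((2 * (j : ℤ) - l : ℤ) : ℂ) * I * x := by
    push_cast [hj']
    ring
  rw [harg]
  push_cast
  ring

open Complex in
lemma key_pointwise (k l : ℕ) (x : ℝ) :
    Complex.cos (k * x) * Complex.cos x ^ l =
      ∑ j ∈ range (l + 1), (l.choose j : ℂ) / 2 ^ (l + 1) *
        (Complex.exp ((((k : ℤ) + 2 * j - l : ℤ) : ℂ) * Complex.I * x) +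
         Complex.exp (((2 * (j : ℤ) - l - k : ℤ) : ℂ) * Complex.I * x)) := by
  rw [cos_pow_expand, Finset.mul_sum]
  refine Finset.sum_congr rfl fun j hj => ?_
  have h : Complex.cos ((k : ℂ) * x) =
      (Complex.exp ((k : ℂ) * x * I) + Complex.exp (-((k : ℂ) * x) * I)) / 2 := rfl
  rw [h]
  have e1 : Complex.exp ((((k : ℤ) + 2 * j - l : ℤ) : ℂ) * I * x) =
      Complex.exp ((k : ℂ) * x * I) * Complex.exp (((2 * (j : ℤ) - l : ℤ) : ℂ) * I * x) := by
    rw [← Complex.exp_add]; congr 1; push_cast; ring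
  have e2 : Complex.exp (((2 * (j : ℤ) - l - k : ℤ) : ℂ) * I * x) =
      Complex.exp (-((k : ℂ) * x) * I) * Complex.exp (((2 * (j : ℤ) - l : ℤ) : ℂ) * I * x) := by
    rw [← Complex.exp_add]; congr 1; push_cast; ring
  rw [e1, e2, pow_succ]
  push_cast
  ring

lemma exp_intervalIntegrable (n : ℤ) :
    IntervalIntegrable (fun x : ℝ => Complex.exp ((n : ℂ) * Complex.I * x))
      MeasureTheory.volume (-π) π :=
  (Complex.continuous_exp.comp ((continuous_const).mul Complex.continuous_ofReal)).intervalIntegrable _ _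

theorem integral_cos_mul_cos_pow (k l : ℕ) (hkl : k ≤ l) (hpar : l % 2 = k % 2) :
    ∫ x in (-π)..π, Real.cos (k * x) * (Real.cos x) ^ l =
      2 * π / 2 ^ (l - k) * ((l - k).choose ((l - k) / 2) : ℝ) *
        ∏ i ∈ Finset.range k, (((l : ℝ) - i) / ((l : ℝ) + k - 2 * i)) := by
  have h2 : (l - k) % 2 = 0 := by omega
  set m := (l - k) / 2 with hm
  have hlk : l - k = 2 * m := by omega
  have hl : l = 2 * m + k := by omega
  -- Step 1: the integral equals 2π * C(l,m) / 2^l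
  have key : ((∫ x in (-π)..π, Real.cos (k * x) * Real.cos x ^ l : ℝ) : ℂ) =
      2 * (π : ℂ) * (l.choose m : ℂ) / 2 ^ l := by
    rw [← intervalIntegral.integral_ofReal]
    have hpt : ∀ x : ℝ, ((Real.cos (k * x) * Real.cos x ^ l : ℝ) : ℂ) =
        Complex.cos (k * x) * Complex.cos x ^ l := by
      intro x; push_cast [Complex.ofReal_cos]; ring
    simp_rw [hpt, key_pointwise]
    rw [intervalIntegral.integral_finset_sum]
    swap
    · intro j hj
      exact (((exp_intervalIntegrable _).add (exp_intervalIntegrable _)).const_mul _)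
    have hterm : ∀ j ∈ range (l + 1),
        (∫ x in (-π)..π, (l.choose j : ℂ) / 2 ^ (l + 1) *
          (Complex.exp ((((k : ℤ) + 2 * j - l : ℤ) : ℂ) * Complex.I * x) +
           Complex.exp (((2 * (j : ℤ) - l - k : ℤ) : ℂ) * Complex.I * x))) =
        (if j = m then (l.choose j : ℂ) / 2 ^ (l + 1) * (2 * π) else 0) +
        (if j = m + k then (l.choose j : ℂ) / 2 ^ (l + 1) * (2 * π) else 0) := by
      intro j hj
      have hj' : j ≤ l := Nat.lt_succ_iff.mp (Finset.mem_range.mp hj)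
      rw [intervalIntegral.integral_const_mul,
        intervalIntegral.integral_add (exp_intervalIntegrable _) (exp_intervalIntegrable _),
        integral_exp_int_mul_I_aux, integral_exp_int_mul_I_aux]
      have c1 : ((k : ℤ) + 2 * j - l = 0) = (j = m) := by
        apply propext; constructor <;> (intro hc; omega)
      have c2 : (2 * (j : ℤ) - l - k = 0) = (j = m + k) := by
        apply propext; constructor <;> (intro hc; omega)
      simp only [c1, c2, mul_add, mul_ite, mul_zero]
    rw [Finset.sum_congr rfl hterm, Finset.sum_add_distrib,
      Finset.sum_ite_eq' (range (l + 1)) m, Finset.sum_ite_eq' (range (l + 1)) (m + k),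
      if_pos (Finset.mem_range.mpr (by omega)), if_pos (Finset.mem_range.mpr (by omega))]
    have hsym : l.choose (m + k) = l.choose m := by
      have : m + k = l - m := by omega
      rw [this, Nat.choose_symm (by omega)]
    rw [hsym]
    have h2l : (2 : ℂ) ^ (l + 1) = 2 ^ l * 2 := by rw [pow_succ]
    rw [h2l]
    have hne : (2 : ℂ) ^ l ≠ 0 := pow_ne_zero _ two_ne_zero
    field_simp
    ring
  have hreal : (∫ x in (-π)..π, Real.cos (k * x) * Real.cos x ^ l : ℝ) =
      2 * π * (l.choose m : ℝ) / 2 ^ l := by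
    exact_mod_cast key
  rw [hreal, hlk]
  -- Step 2: algebraic identity
  have hprod : (∏ i ∈ Finset.range k, (((l : ℝ) - i) / ((l : ℝ) + k - 2 * i))) =
      (∏ i ∈ Finset.range k, ((l : ℝ) - i)) / (∏ i ∈ Finset.range k, ((l : ℝ) + k - 2 * i)) :=
    Finset.prod_div_distrib _ _
  have hnum : (∏ i ∈ Finset.range k, ((l : ℝ) - i)) = (l.descFactorial k : ℝ) := by
    rw [Nat.descFactorial_eq_prod_range, Nat.cast_prod]
    refine Finset.prod_congr rfl fun i hi => ?_
    have : i ≤ l := le_trans (Nat.le_of_lt (Finset.mem_range.mp hi)) hkl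
    rw [Nat.cast_sub this]
  have hden : (∏ i ∈ Finset.range k, ((l : ℝ) + k - 2 * i)) =
      2 ^ k * ((m + k).descFactorial k : ℝ) := by
    have step : (∏ i ∈ Finset.range k, ((l : ℝ) + k - 2 * i)) =
        ∏ i ∈ Finset.range k, (2 : ℝ) * (((m + k : ℕ) : ℝ) - i) := by
      refine Finset.prod_congr rfl fun i hi => ?_
      have hlr : (l : ℝ) = 2 * m + k := by exact_mod_cast hl
      push_cast
      rw [hlr]; ring
    rw [step, Finset.prod_mul_distrib, Finset.prod_const, Finset.card_range,
      Nat.descFactorial_eq_prod_range, Nat.cast_prod]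
    congr 1
    refine Finset.prod_congr rfl fun i hi => ?_
    have hik : i < k := Finset.mem_range.mp hi
    rw [Nat.cast_sub (by omega)]
  have hdF1 : (l.descFactorial k : ℝ) = (l ! : ℝ) / ((2 * m)! : ℝ) := by
    have h := Nat.factorial_mul_descFactorial hkl
    rw [hlk] at h
    have h' : ((2 * m)! : ℝ) * (l.descFactorial k : ℝ) = (l ! : ℝ) := by exact_mod_cast h
    have n3' : ((2 * m)! : ℝ) ≠ 0 := by exact_mod_cast Nat.factorial_ne_zero (2 * m)
    rw [eq_div_iff n3', mul_comm]
    exact h'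
  have hdF2 : ((m + k).descFactorial k : ℝ) = ((m + k)! : ℝ) / (m ! : ℝ) := by
    have h := Nat.factorial_mul_descFactorial (Nat.le_add_left k m)
    have hmk : m + k - k = m := by omega
    rw [hmk] at h
    have h' : ((m)! : ℝ) * ((m + k).descFactorial k : ℝ) = ((m + k)! : ℝ) := by exact_mod_cast h
    have n1' : ((m)! : ℝ) ≠ 0 := by exact_mod_cast Nat.factorial_ne_zero m
    rw [eq_div_iff n1', mul_comm]
    exact h'
  have hch1 : (l.choose m : ℝ) = (l ! : ℝ) / ((m ! : ℝ) * ((m + k)! : ℝ)) := by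
    rw [Nat.cast_choose ℝ (by omega : m ≤ l), show l - m = m + k from by omega]
  have hch2 : ((2 * m).choose m : ℝ) = ((2 * m)! : ℝ) / ((m ! : ℝ) * (m ! : ℝ)) := by
    rw [Nat.cast_choose ℝ (by omega : m ≤ 2 * m), show 2 * m - m = m from by omega]
  rw [hprod, hnum, hden, hdF1, hdF2, hch1, hch2]
  have hpow : (2 : ℝ) ^ l = 2 ^ (2 * m) * 2 ^ k := by
    rw [hl, ← pow_add]
  rw [hpow]
  have n1 : (m ! : ℝ) ≠ 0 := by exact_mod_cast Nat.factorial_ne_zero m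
  have n2 : ((m + k)! : ℝ) ≠ 0 := by exact_mod_cast Nat.factorial_ne_zero (m + k)
  have n3 : ((2 * m)! : ℝ) ≠ 0 := by exact_mod_cast Nat.factorial_ne_zero (2 * m)
  have n4 : (2 : ℝ) ^ (2 * m) ≠ 0 := pow_ne_zero _ two_ne_zero
  have n5 : (2 : ℝ) ^ k ≠ 0 := pow_ne_zero _ two_ne_zero
  field_simp
end

section
/- For every natural number n ≥ 1 and every k ∈ {1,…,n} with k ≠ (n+1)/2, one has (2/(n+1))² · ∑_{i=1}^{n} sin⁴(k i π/(n+1)) = 3/(2(n+1)). -/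
open Real Finset

lemma cos_sum_eq_zero (n m : ℕ) (h : ¬ (n + 1 : ℕ) ∣ m) :
    ∑ i ∈ Finset.range (n + 1), Real.cos (2 * π * m * i / (n + 1)) = 0 := by
  have hn1 : ((n : ℝ) + 1) ≠ 0 := by positivity
  set θ : ℝ := 2 * π * m / (n + 1) with hθ
  have harg : ∀ i : ℕ, 2 * π * (m:ℝ) * i / ((n:ℝ) + 1) = θ * i := by
    intro i; rw [hθ]; ring
  simp only [harg]
  set z : ℂ := Complex.exp (θ * Complex.I) with hz
  have hzpow : ∀ i : ℕ, z ^ i = Complex.exp ((θ * i : ℝ) * Complex.I) := by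
    intro i
    rw [hz, ← Complex.exp_nat_mul]
    congr 1
    push_cast
    ring
  have key : θ * ((n : ℝ) + 1) = m * (2 * π) := by
    rw [hθ]; field_simp
  have hzn : z ^ (n + 1) = 1 := by
    rw [hzpow]
    refine Complex.exp_eq_one_iff.mpr ⟨(m : ℤ), ?_⟩
    push_cast
    rw [show (θ : ℂ) * ((n : ℂ) + 1) * Complex.I = ((θ * ((n:ℝ)+1) : ℝ) : ℂ) * Complex.I by
      push_cast; ring, key]
    push_cast
    ring
  have hz1 : z ≠ 1 := by
    intro hc
    rw [hz, Complex.exp_eq_one_iff] at hc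
    obtain ⟨j, hj⟩ := hc
    have hθj : (θ : ℂ) = (j : ℂ) * (2 * π) := by
      apply mul_right_cancel₀ Complex.I_ne_zero
      rw [hj]; ring
    have hre : θ = (j : ℝ) * (2 * π) := by exact_mod_cast hθj
    have hm : (m : ℝ) = (j : ℝ) * ((n : ℝ) + 1) := by
      have h2π : (2 * π : ℝ) ≠ 0 := by positivity
      have : 2 * π * ((m : ℝ) / ((n:ℝ) + 1)) = 2 * π * ((j:ℝ)) := by
        calc 2 * π * ((m : ℝ) / ((n:ℝ) + 1)) = θ := by rw [hθ]; ring
          _ = (j:ℝ) * (2 * π) := hre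
          _ = 2 * π * (j:ℝ) := by ring
      have hdiv := mul_left_cancel₀ h2π this
      field_simp at hdiv
      linarith [hdiv]
    have hj0 : 0 ≤ j := by
      by_contra hj0
      push_neg at hj0
      have hjr : (j : ℝ) < 0 := by exact_mod_cast hj0
      have hnp : (0:ℝ) < (n:ℝ) + 1 := by positivity
      nlinarith [hm, (Nat.cast_nonneg m : (0:ℝ) ≤ (m:ℝ))]
    apply h
    refine ⟨j.toNat, ?_⟩
    have hmz : (m : ℤ) = j * ((n : ℤ) + 1) := by exact_mod_cast hm
    have : (m : ℤ) = ((n : ℤ) + 1) * j.toNat := by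
      rw [hmz, Int.toNat_of_nonneg hj0]; ring
    exact_mod_cast this
  have hgeom : ∑ i ∈ Finset.range (n + 1), z ^ i = 0 := by
    rw [geom_sum_eq hz1, hzn]
    simp
  have hre := congrArg Complex.re hgeom
  rw [Complex.re_sum] at hre
  simp only [hzpow, Complex.exp_ofReal_mul_I_re] at hre
  simpa using hre

theorem sum_sin_fourth (n k : ℕ) (hn : 1 ≤ n) (hk1 : 1 ≤ k) (hkn : k ≤ n)
    (hk : 2 * k ≠ n + 1) :
    (2 / ((n : ℝ) + 1)) ^ 2 * ∑ i ∈ Finset.Icc 1 n, Real.sin (k * i * π / (n + 1)) ^ 4 =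
      3 / (2 * ((n : ℝ) + 1)) := by
  have hn1 : ((n : ℝ) + 1) > 0 := by positivity
  have hd1 : ¬ (n + 1 : ℕ) ∣ k := by
    rintro ⟨c, hc⟩
    rcases c with _ | c
    · omega
    · nlinarith
  have hd2 : ¬ (n + 1 : ℕ) ∣ 2 * k := by
    rintro ⟨c, hc⟩
    rcases c with _ | _ | c
    · omega
    · omega
    · nlinarith
  have h1 := cos_sum_eq_zero n k hd1
  have h2 := cos_sum_eq_zero n (2 * k) hd2
  have hins : Finset.range (n + 1) = insert 0 (Finset.Icc 1 n) := by
    ext x; simp; omega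
  have hsum : ∀ m : ℕ, (∑ i ∈ Finset.range (n + 1), Real.cos (2 * π * m * i / (n + 1)))
      = 1 + ∑ i ∈ Finset.Icc 1 n, Real.cos (2 * π * m * i / (n + 1)) := by
    intro m
    rw [hins, Finset.sum_insert (by simp)]
    norm_num
  have hc1 : ∑ i ∈ Finset.Icc 1 n, Real.cos (2 * π * k * i / (n + 1)) = -1 := by
    have h := hsum k; rw [h1] at h; linarith
  have hc2 : ∑ i ∈ Finset.Icc 1 n, Real.cos (2 * π * (2 * (k:ℝ)) * i / (n + 1)) = -1 := by
    have h := hsum (2 * k); rw [h2] at h; push_cast at h; linarith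
  have hpt : ∀ i ∈ Finset.Icc 1 n, Real.sin (k * i * π / (n + 1)) ^ 4
      = 3 / 8 - Real.cos (2 * π * k * i / (n + 1)) / 2
        + Real.cos (2 * π * (2 * (k:ℝ)) * i / (n + 1)) / 8 := by
    intro i _
    set x : ℝ := k * i * π / (n + 1) with hx
    have e2 : (2 * π * k * i / ((n:ℝ) + 1) : ℝ) = 2 * x := by rw [hx]; ring
    have e4 : (2 * π * (2 * (k:ℝ)) * i / ((n:ℝ) + 1) : ℝ) = 2 * (2 * x) := by rw [hx]; ring
    rw [e2, e4, Real.cos_two_mul (2 * x), Real.cos_two_mul x]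
    have hs : Real.sin x ^ 2 = 1 - Real.cos x ^ 2 := by
      nlinarith [Real.sin_sq_add_cos_sq x]
    rw [show Real.sin x ^ 4 = (Real.sin x ^ 2) ^ 2 by ring, hs]
    ring
  rw [Finset.sum_congr rfl hpt, Finset.sum_add_distrib, Finset.sum_sub_distrib,
    ← Finset.sum_div, ← Finset.sum_div, ← Finset.sum_div, hc1, hc2, Finset.sum_const, Nat.card_Icc,
    nsmul_eq_mul]
  have hcard : ((n + 1 - 1 : ℕ) : ℝ) = n := by simp
  rw [hcard]
  field_simp
  ring
end

section
/- Let n ≥ 1 and let k, l ∈ {1,…,n} satisfy k ≠ l and k + l ≠ n + 1. Then (2/(n+1))² · ∑_{i=1}^{n} sin²(k i π/(n+1)) · sin²(l i π/(n+1)) = 1/(n+1). -/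
open Real Finset

lemma sum_cos_eq_neg_one (n : ℕ) (m : ℤ) (h : ¬ (((n : ℤ) + 1) ∣ m)) :
    ∑ i ∈ Finset.Icc 1 n, Real.cos (2 * m * i * π / (n + 1)) = -1 := by
  have hN : (n : ℝ) + 1 ≠ 0 := by positivity
  have hNc : (n : ℂ) + 1 ≠ 0 := by exact_mod_cast hN
  set θ : ℝ := 2 * m * π / (n + 1) with hθ
  have hz1 : Complex.exp (θ * Complex.I) ≠ 1 := by
    intro heq
    rw [Complex.exp_eq_one_iff] at heq
    obtain ⟨j, hj⟩ := heq
    apply h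
    have hj2 : (θ : ℂ) = (j : ℂ) * (2 * π) := by
      have := mul_right_cancel₀ Complex.I_ne_zero
        (show (θ : ℂ) * Complex.I = ((j : ℂ) * (2 * π)) * Complex.I by
          rw [hj]; ring)
      exact this
    have hj3 : θ = (j : ℝ) * (2 * π) := by exact_mod_cast hj2
    rw [hθ] at hj3
    have hm : (m : ℝ) = (j : ℝ) * ((n : ℝ) + 1) := by
      field_simp at hj3
      have h2pi : (2 * π : ℝ) ≠ 0 := by positivity
      exact mul_left_cancel₀ h2pi (by linear_combination (2 * π) * hj3)
    have : m = j * ((n : ℤ) + 1) := by exact_mod_cast hm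
    exact ⟨j, by linarith⟩
  have hpow : Complex.exp (θ * Complex.I) ^ (n + 1) = 1 := by
    rw [← Complex.exp_nat_mul]
    have : ((n : ℂ) + 1) * ((θ : ℂ) * Complex.I) = (m : ℂ) * (2 * π * Complex.I) := by
      have h2 : ((θ : ℂ)) * ((n : ℂ) + 1) = 2 * (m : ℂ) * π := by
        rw [hθ]; push_cast; field_simp
      linear_combination Complex.I * h2
    push_cast
    rw [this, Complex.exp_int_mul_two_pi_mul_I]
  have hsum0 : ∑ i ∈ Finset.range (n + 1), Complex.exp (θ * Complex.I) ^ i = 0 := by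
    rw [geom_sum_eq hz1, hpow]
    simp
  have hre : ∀ i : ℕ, (Complex.exp (θ * Complex.I) ^ i).re = Real.cos (i * θ) := by
    intro i
    rw [← Complex.exp_nat_mul]
    have : (i : ℂ) * ((θ : ℂ) * Complex.I) = ((i * θ : ℝ) : ℂ) * Complex.I := by
      push_cast; ring
    rw [this, Complex.exp_ofReal_mul_I_re]
  have hsumre : ∑ i ∈ Finset.range (n + 1), Real.cos (i * θ) = 0 := by
    have := congrArg Complex.re hsum0
    rw [Complex.re_sum] at this
    simpa [hre] using this
  have hsplit : Finset.range (n + 1) = insert 0 (Finset.Icc 1 n) := by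
    ext x; simp [Nat.lt_succ_iff]; omega
  rw [hsplit, Finset.sum_insert (by simp)] at hsumre
  simp only [Nat.cast_zero, zero_mul, Real.cos_zero] at hsumre
  have hterm : ∀ i ∈ Finset.Icc 1 n, Real.cos (2 * m * i * π / (n + 1)) = Real.cos (i * θ) := by
    intro i _
    rw [hθ]; ring_nf
  rw [Finset.sum_congr rfl hterm]
  linarith

theorem sum_sin_sq_mul_sin_sq (n k l : ℕ) (hn : 1 ≤ n)
    (hk1 : 1 ≤ k) (hkn : k ≤ n) (hl1 : 1 ≤ l) (hln : l ≤ n)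
    (hkl : k ≠ l) (hsum : k + l ≠ n + 1) :
    (2 / ((n : ℝ) + 1)) ^ 2 *
        ∑ i ∈ Finset.Icc 1 n,
          Real.sin (k * i * π / (n + 1)) ^ 2 * Real.sin (l * i * π / (n + 1)) ^ 2 =
      1 / ((n : ℝ) + 1) := by
  have hN : (n : ℝ) + 1 ≠ 0 := by positivity
  have hdk : ¬ (((n : ℤ) + 1) ∣ (k : ℤ)) := by
    intro h
    have := Int.eq_zero_of_dvd_of_natAbs_lt_natAbs h (by omega)
    omega
  have hdl : ¬ (((n : ℤ) + 1) ∣ (l : ℤ)) := by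
    intro h
    have := Int.eq_zero_of_dvd_of_natAbs_lt_natAbs h (by omega)
    omega
  have hdkl : ¬ (((n : ℤ) + 1) ∣ ((k : ℤ) + l)) := by
    intro h
    have hle := Int.le_of_dvd (by omega) h
    have h2 : ((n : ℤ) + 1) ∣ ((k : ℤ) + l - ((n : ℤ) + 1)) := (dvd_sub_right h).mpr dvd_rfl
    have := Int.eq_zero_of_dvd_of_natAbs_lt_natAbs h2 (by omega)
    omega
  have hdsub : ¬ (((n : ℤ) + 1) ∣ ((k : ℤ) - l)) := by
    intro h
    have := Int.eq_zero_of_dvd_of_natAbs_lt_natAbs h (by omega)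
    omega
  have h1 := sum_cos_eq_neg_one n k hdk
  have h2 := sum_cos_eq_neg_one n l hdl
  have h3 := sum_cos_eq_neg_one n ((k : ℤ) + l) hdkl
  have h4 := sum_cos_eq_neg_one n ((k : ℤ) - l) hdsub
  push_cast at h1 h2 h3 h4
  have hterm : ∀ i ∈ Finset.Icc 1 n,
      Real.sin (k * i * π / (n + 1)) ^ 2 * Real.sin (l * i * π / (n + 1)) ^ 2 =
      1 / 4 - (1 / 4) * Real.cos (2 * k * i * π / (n + 1))
        - (1 / 4) * Real.cos (2 * l * i * π / (n + 1))
        + (1 / 8) * Real.cos (2 * ((k : ℝ) + l) * i * π / (n + 1))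
        + (1 / 8) * Real.cos (2 * ((k : ℝ) - l) * i * π / (n + 1)) := by
    intro i _
    set a : ℝ := k * i * π / (n + 1) with ha
    set b : ℝ := l * i * π / (n + 1) with hb
    have e1 : (2 : ℝ) * k * i * π / (n + 1) = 2 * a := by rw [ha]; ring
    have e2 : (2 : ℝ) * l * i * π / (n + 1) = 2 * b := by rw [hb]; ring
    have e3 : (2 : ℝ) * ((k : ℝ) + l) * i * π / (n + 1) = 2 * a + 2 * b := by
      rw [ha, hb]; field_simp
    have e4 : (2 : ℝ) * ((k : ℝ) - l) * i * π / (n + 1) = 2 * a - 2 * b := by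
      rw [ha, hb]; field_simp
    rw [e1, e2, e3, e4, Real.cos_add, Real.cos_sub,
      Real.cos_two_mul, Real.cos_two_mul, Real.sin_two_mul, Real.sin_two_mul,
      Real.sin_sq, Real.sin_sq]
    ring
  rw [Finset.sum_congr rfl hterm]
  simp only [Finset.sum_add_distrib, Finset.sum_sub_distrib, ← Finset.mul_sum,
    Finset.sum_const, Nat.card_Icc, smul_eq_mul, Nat.add_sub_cancel]
  rw [h1, h2, h3, h4]
  field_simp
  ring
end

section
/- For every integer k and real t ≥ 0, define ρ_k(t) = (1/(4π²)) ∫_{−π}^{π} ∫_{−π}^{π} cos(kx)·cos(ky)·exp(−(t/2)(cos x − cos y)²) dx dy. Then ρ_k(t) = ∑_{n=|k|}^{∞} ((−1)^{n+k}/8^n)·C(2n,n)·C(2n,n+k)·t^n/n!. -/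
open Real Finset intervalIntegral MeasureTheory

def G (m : ℕ) (a : ℕ) : ℕ :=
  if (m + a) % 2 = 0 then m.choose ((m + a)/2) else 0

def F (m : ℕ) (k : ℤ) : ℕ := G m k.natAbs

lemma G_pascal_pos (m a : ℕ) (ha : 1 ≤ a) :
    G (m+1) a = G m (a-1) + G m (a+1) := by
  unfold G
  rcases Nat.even_or_odd (m + 1 + a) with h | h
  · have h0 : (m + 1 + a) % 2 = 0 := Nat.even_iff.mp h
    have h1 : (m + (a-1)) % 2 = 0 := by omega
    have h2 : (m + (a+1)) % 2 = 0 := by omega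
    rw [if_pos h0, if_pos h1, if_pos h2]
    have e1 : (m + 1 + a)/2 = (m + (a-1))/2 + 1 := by omega
    have e2 : (m + (a+1))/2 = (m + (a-1))/2 + 1 := by omega
    rw [e1, Nat.choose_succ_succ']
    congr 2
    omega
  · have h0 : ¬ (m + 1 + a) % 2 = 0 := by
      have := Nat.odd_iff.mp h; omega
    have h1 : ¬ (m + (a-1)) % 2 = 0 := by omega
    have h2 : ¬ (m + (a+1)) % 2 = 0 := by omega
    rw [if_neg h0, if_neg h1, if_neg h2]

lemma G_pascal_zero (m : ℕ) : G (m+1) 0 = G m 1 + G m 1 := by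
  unfold G
  rcases Nat.even_or_odd (m + 1) with h | h
  · have h0 : (m + 1 + 0) % 2 = 0 := by have := Nat.even_iff.mp h; omega
    have h1 : (m + 1) % 2 = 0 := by omega
    rw [if_pos h0, if_pos h1]
    obtain ⟨j, hj⟩ : ∃ j, m = 2*j+1 := by
      refine ⟨(m-1)/2, by omega⟩
    subst hj
    have e1 : (2*j+1+1+0)/2 = j+1 := by omega
    have e2 : (2*j+1+1)/2 = j+1 := by omega
    rw [e1, Nat.choose_succ_succ']
    have hs := Nat.choose_symm (show j+1 ≤ 2*j+1 by omega)
    have ej : 2*j+1-(j+1) = j := by omega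
    rw [ej] at hs
    rw [hs]
  · have h0 : ¬ (m + 1 + 0) % 2 = 0 := by have := Nat.odd_iff.mp h; omega
    have h1 : ¬ (m + 1) % 2 = 0 := by omega
    rw [if_neg h0, if_neg h1]

lemma F_pascal (m : ℕ) (k : ℤ) : F (m+1) k = F m (k-1) + F m (k+1) := by
  unfold F
  rcases lt_trichotomy k 0 with h | h | h
  · have e1 : (k-1).natAbs = k.natAbs + 1 := by omega
    have e2 : (k+1).natAbs = k.natAbs - 1 := by omega
    rw [e1, e2, G_pascal_pos m k.natAbs (by omega), Nat.add_comm]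
  · subst h; simpa using G_pascal_zero m
  · have e1 : (k-1).natAbs = k.natAbs - 1 := by omega
    have e2 : (k+1).natAbs = k.natAbs + 1 := by omega
    rw [e1, e2, G_pascal_pos m k.natAbs (by omega)]

lemma F_zero (k : ℤ) : F 0 k = if k = 0 then 1 else 0 := by
  unfold F G
  rcases eq_or_ne k 0 with h | h
  · subst h; simp
  · have : k.natAbs ≠ 0 := by omega
    rcases Nat.even_or_odd k.natAbs with he | ho
    · have h2 : k.natAbs % 2 = 0 := Nat.even_iff.mp he
      rw [if_pos (by omega), if_neg h]
      rw [Nat.choose_eq_zero_of_lt (by omega)]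
    · rw [if_neg (by have := Nat.odd_iff.mp ho; omega), if_neg h]

lemma F_conv (m : ℕ) (p q : ℤ) :
    ∑ j ∈ range (m+1), m.choose j * F j p * F (m-j) q
      = F m (p+q) * F m (p-q) := by
  induction m generalizing p q with
  | zero =>
    rw [show (0:ℕ)+1 = 1 from rfl, Finset.sum_range_one]
    simp only [Nat.choose_self, one_mul, Nat.zero_sub]
    rw [F_zero, F_zero, F_zero, F_zero]
    split_ifs <;> first | rfl | omega | (exfalso; omega) | norm_num
  | succ m ih =>
    rw [Finset.sum_range_succ']
    have step1 : ∀ j ∈ range (m+1),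
        (m+1).choose (j+1) * F (j+1) p * F (m+1-(j+1)) q
        = (m.choose j * F j (p-1) * F (m-j) q
            + m.choose j * F j (p+1) * F (m-j) q)
          + m.choose (j+1) * F (j+1) p * F (m+1-(j+1)) q := by
      intro j hj
      rw [Nat.choose_succ_succ']
      have : F (j+1) p = F j (p-1) + F j (p+1) := F_pascal j p
      have e : m + 1 - (j+1) = m - j := by omega
      rw [this, e]
      ring
    rw [Finset.sum_congr rfl step1, Finset.sum_add_distrib, Finset.sum_add_distrib]
    rw [ih (p-1) q, ih (p+1) q]
    -- now handle B + f 0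
    have hB : (∑ j ∈ range (m+1), m.choose (j+1) * F (j+1) p * F (m+1-(j+1)) q)
        + (m+1).choose 0 * F 0 p * F (m+1-0) q
        = F m (p+(q-1)) * F m (p-(q-1)) + F m (p+(q+1)) * F m (p-(q+1)) := by
      have : (∑ j ∈ range (m+1), m.choose (j+1) * F (j+1) p * F (m+1-(j+1)) q)
          + (m+1).choose 0 * F 0 p * F (m+1-0) q
          = ∑ j ∈ range (m+2), m.choose j * F j p * F (m+1-j) q := by
        rw [Finset.sum_range_succ' (fun j => m.choose j * F j p * F (m+1-j) q) (m+1)]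
        simp
      rw [this, Finset.sum_range_succ, Nat.choose_eq_zero_of_lt (by omega)]
      simp only [zero_mul, add_zero]
      have step2 : ∀ j ∈ range (m+1),
          m.choose j * F j p * F (m+1-j) q
          = m.choose j * F j p * F (m-j) (q-1) + m.choose j * F j p * F (m-j) (q+1) := by
        intro j hj
        simp only [mem_range] at hj
        have e : m + 1 - j = (m - j) + 1 := by omega
        rw [e, F_pascal]
        ring
      rw [Finset.sum_congr rfl step2, Finset.sum_add_distrib, ih p (q-1), ih p (q+1)]
    rw [add_assoc, hB, F_pascal, F_pascal]
    have e1 : p - 1 + q = p + q - 1 := by ring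
    have e2 : p - 1 - q = p - q - 1 := by ring
    have e3 : p + 1 + q = p + q + 1 := by ring
    have e4 : p + 1 - q = p - q + 1 := by ring
    have e5 : p + (q-1) = p + q - 1 := by ring
    have e6 : p - (q-1) = p - q + 1 := by ring
    have e7 : p + (q+1) = p + q + 1 := by ring
    have e8 : p - (q+1) = p - q - 1 := by ring
    rw [e1, e2, e3, e4, e5, e6, e7, e8]
    ring


lemma integral_cos_int (c : ℤ) :
    ∫ x in (-π)..π, Real.cos (c * x) = if c = 0 then 2*π else 0 := by
  rcases eq_or_ne c 0 with rfl | h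
  · simp [two_mul]
  · have hc : (c:ℝ) ≠ 0 := Int.cast_ne_zero.mpr h
    rw [if_neg h]
    have := intervalIntegral.integral_comp_mul_left (a := -π) (b := π) Real.cos hc
    rw [this, integral_cos]
    have h1 : Real.sin ((c:ℝ) * π) = 0 := Real.sin_int_mul_pi c
    have h2 : Real.sin ((c:ℝ) * (-π)) = 0 := by
      rw [mul_neg, Real.sin_neg, h1, neg_zero]
    rw [h1, h2]
    simp

lemma cosIntegrable (c : ℤ) (m : ℕ) :
    IntervalIntegrable (fun x => Real.cos (c*x) * Real.cos x ^ m) volume (-π) π := by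
  apply Continuous.intervalIntegrable
  fun_prop

lemma intA (m : ℕ) (c : ℤ) :
    ∫ x in (-π)..π, Real.cos (c*x) * Real.cos x ^ m = 2*π * (F m c) / 2^m := by
  induction m generalizing c with
  | zero =>
    simp only [pow_zero, mul_one]
    rw [integral_cos_int, F_zero]
    split_ifs <;> simp
  | succ m ih =>
    have key : ∀ x ∈ Set.uIcc (-π) π, Real.cos ((c:ℝ)*x) * Real.cos x ^ (m+1)
        = Real.cos (((c-1:ℤ):ℝ)*x) * Real.cos x ^ m / 2
          + Real.cos (((c+1:ℤ):ℝ)*x) * Real.cos x ^ m / 2 := by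
      intro x _
      push_cast
      rw [sub_mul, add_mul, Real.cos_sub, Real.cos_add, pow_succ]
      ring
    rw [intervalIntegral.integral_congr key]
    rw [intervalIntegral.integral_add ((cosIntegrable (c-1) m).div_const 2)
      ((cosIntegrable (c+1) m).div_const 2)]
    rw [intervalIntegral.integral_div, intervalIntegral.integral_div, ih, ih, F_pascal]
    push_cast
    ring

lemma inner_eval (n : ℕ) (k : ℤ) (x : ℝ) :
    ∫ y in (-π)..π, Real.cos (k*y) * (Real.cos x - Real.cos y)^(2*n)
      = ∑ j ∈ range (2*n+1),
          ((2*n).choose j : ℝ) * (-1)^j * (Real.cos x)^(2*n-j) * (2*π*(F j k)/2^j) := by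
  have expand : ∀ y ∈ Set.uIcc (-π) π,
      Real.cos (k*y) * (Real.cos x - Real.cos y)^(2*n)
      = ∑ j ∈ range (2*n+1), ((2*n).choose j : ℝ) * (-1)^j * (Real.cos x)^(2*n-j)
          * (Real.cos (k*y) * Real.cos y ^ j) := by
    intro y _
    rw [show Real.cos x - Real.cos y = -Real.cos y + Real.cos x by ring, add_pow,
      Finset.mul_sum]
    refine Finset.sum_congr rfl fun j hj => ?_
    rw [neg_pow]
    ring
  rw [intervalIntegral.integral_congr expand,
    intervalIntegral.integral_finset_sum
      (fun j _ => ((cosIntegrable k j).const_mul _))]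
  refine Finset.sum_congr rfl fun j hj => ?_
  rw [intervalIntegral.integral_const_mul, intA]

lemma swap1 (k : ℤ) (t : ℝ) (ht : 0 ≤ t) (x : ℝ) :
    ∫ y in (-π)..π,
        Real.cos (k*x) * Real.cos (k*y) * Real.exp (-(t/2)*(Real.cos x - Real.cos y)^2)
      = ∑' n : ℕ, ((-(t/2))^n / n.factorial)
          * ∫ y in (-π)..π,
              Real.cos (k*x) * Real.cos (k*y) * (Real.cos x - Real.cos y)^(2*n) := by
  set μ := volume.restrict (Set.Ioc (-π) π) with hμ
  set Fn : ℕ → ℝ → ℝ := fun n y =>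
    Real.cos (k*x) * Real.cos (k*y)
      * ((-(t/2)*(Real.cos x - Real.cos y)^2)^n / n.factorial) with hFn
  have hpt : ∀ y : ℝ,
      Real.cos (k*x) * Real.cos (k*y) * Real.exp (-(t/2)*(Real.cos x - Real.cos y)^2)
      = ∑' n : ℕ, Fn n y := by
    intro y
    rw [Real.exp_eq_exp_ℝ, NormedSpace.exp_eq_tsum_div]
    rw [← tsum_mul_left]
  have hcont : ∀ n : ℕ, Continuous (Fn n) := by
    intro n; fun_prop
  have hint : ∀ n : ℕ, Integrable (Fn n) μ := fun n =>
    (hcont n).integrableOn_Ioc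
  have hbd : ∀ n : ℕ, ∀ y : ℝ, ‖Fn n y‖ ≤ (2*t)^n / n.factorial := by
    intro n y
    have h1 : |Real.cos (k*x)| ≤ 1 := Real.abs_cos_le_one _
    have h2 : |Real.cos (k*y)| ≤ 1 := Real.abs_cos_le_one _
    have h4 : (Real.cos x - Real.cos y)^2 ≤ 4 := by
      have := Real.neg_one_le_cos x
      have := Real.cos_le_one x
      have := Real.neg_one_le_cos y
      have := Real.cos_le_one y
      nlinarith
    have h5 : |(-(t/2)*(Real.cos x - Real.cos y)^2)^n| ≤ (2*t)^n := by
      rw [abs_pow]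
      apply pow_le_pow_left₀ (abs_nonneg _)
      rw [abs_mul, abs_neg]
      have hsq : |(Real.cos x - Real.cos y)^2| ≤ 4 := by
        rw [abs_of_nonneg (sq_nonneg _)]; exact h4
      calc |t/2| * |(Real.cos x - Real.cos y)^2| ≤ (t/2) * 4 := by
            apply mul_le_mul (le_of_eq (abs_of_nonneg (by linarith))) hsq (abs_nonneg _)
            linarith
        _ = 2*t := by ring
    have hfact : (0:ℝ) < n.factorial := by positivity
    rw [hFn]
    simp only [norm_mul, norm_div, Real.norm_eq_abs]
    rw [abs_of_nonneg (le_of_lt hfact)]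
    calc |Real.cos (k*x)| * |Real.cos (k*y)|
          * (|(-(t/2)*(Real.cos x - Real.cos y)^2)^n| / (n.factorial : ℝ))
        ≤ 1 * 1 * ((2*t)^n / n.factorial) := by
          gcongr
      _ = (2*t)^n / n.factorial := by ring
  have hle : -π ≤ π := by linarith [Real.pi_pos]
  have hsum : Summable (fun n : ℕ => ∫ y, ‖Fn n y‖ ∂μ) := by
    apply Summable.of_nonneg_of_le (fun n => integral_nonneg (fun y => norm_nonneg _))
      (fun n => ?_) ((Real.summable_pow_div_factorial (2*t)).mul_right (2*π))
    calc ∫ y, ‖Fn n y‖ ∂μ ≤ ∫ _, (2*t)^n / n.factorial ∂μ :=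
        integral_mono (hint n).norm (integrable_const _) (fun y => hbd n y)
      _ = (2*t)^n / n.factorial * (2*π) := by
        rw [MeasureTheory.integral_const, hμ, measureReal_restrict_apply_univ, Real.volume_real_Ioc,
          smul_eq_mul, max_eq_left (by linarith : (0:ℝ) ≤ π - (-π))]
        ring
  have hswap := MeasureTheory.integral_tsum_of_summable_integral_norm hint hsum
  rw [intervalIntegral.integral_of_le hle]
  have hrw : (∫ y in Set.Ioc (-π) π,
      Real.cos (k*x) * Real.cos (k*y) * Real.exp (-(t/2)*(Real.cos x - Real.cos y)^2))
      = ∫ y, (∑' n, Fn n y) ∂μ := by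
    rw [hμ]
    exact MeasureTheory.integral_congr_ae (Filter.Eventually.of_forall fun y => hpt y)
  rw [hrw, ← hswap]
  refine tsum_congr fun n => ?_
  have hptn : ∀ y ∈ Set.uIcc (-π) π, Fn n y
      = ((-(t/2))^n / n.factorial)
        * (Real.cos (k*x) * Real.cos (k*y) * (Real.cos x - Real.cos y)^(2*n)) := by
    intro y _
    rw [hFn]
    simp only []
    rw [mul_pow, pow_mul]
    ring
  calc (∫ y, Fn n y ∂μ) = ∫ y in (-π)..π, Fn n y := by
        rw [intervalIntegral.integral_of_le hle, hμ]
    _ = ∫ y in (-π)..π, ((-(t/2))^n / n.factorial)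
          * (Real.cos (k*x) * Real.cos (k*y) * (Real.cos x - Real.cos y)^(2*n)) :=
        intervalIntegral.integral_congr hptn
    _ = ((-(t/2))^n / n.factorial)
          * ∫ y in (-π)..π,
              Real.cos (k*x) * Real.cos (k*y) * (Real.cos x - Real.cos y)^(2*n) :=
        intervalIntegral.integral_const_mul _ _

lemma sgn_lemma (j : ℕ) (k : ℤ) :
    ((-1:ℝ))^j * (F j k : ℝ) = (-1)^(k.natAbs) * (F j k : ℝ) := by
  by_cases hF : F j k = 0
  · rw [hF]; simp
  · have hpar : (j + k.natAbs) % 2 = 0 := by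
      by_contra hodd
      exact hF (by unfold F G; rw [if_neg hodd])
    congr 1
    rcases Nat.even_or_odd j with he | ho
    · have ha : Even k.natAbs := by
        rw [Nat.even_iff] at he ⊢; omega
      rw [he.neg_one_pow, ha.neg_one_pow]
    · have ha : Odd k.natAbs := by
        rw [Nat.odd_iff] at ho ⊢; omega
      rw [ho.neg_one_pow, ha.neg_one_pow]

lemma sum_eval (n : ℕ) (k : ℤ) :
    ∑ j ∈ range (2*n+1), ((2*n).choose j : ℝ) * (-1)^j
        * (2*π*(F (2*n-j) k)/2^(2*n-j)) * (2*π*(F j k)/2^j)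
      = (-1)^(k.natAbs) * (4*π^2/4^n)
          * (((2*n).choose n : ℝ)) * (((2*n).choose (n + k.natAbs) : ℝ)) := by
  have step : ∀ j ∈ range (2*n+1),
      ((2*n).choose j : ℝ) * (-1)^j * (2*π*(F (2*n-j) k)/2^(2*n-j)) * (2*π*(F j k)/2^j)
      = (-1)^(k.natAbs) * (4*π^2/4^n)
          * (((2*n).choose j * F j k * F (2*n-j) k : ℕ) : ℝ) := by
    intro j hj
    simp only [mem_range] at hj
    have hpow : (2:ℝ)^(2*n-j) * 2^j = 4^n := by
      rw [← pow_add]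
      have : 2*n-j+j = 2*n := by omega
      rw [this, pow_mul]
      norm_num
    have hs := sgn_lemma j k
    calc ((2*n).choose j : ℝ) * (-1)^j * (2*π*(F (2*n-j) k)/2^(2*n-j)) * (2*π*(F j k)/2^j)
        = ((-1)^j * (F j k : ℝ))
            * (((2*n).choose j : ℝ) * (F (2*n-j) k : ℝ) * (4*π^2/(2^(2*n-j)*2^j))) := by
          ring
      _ = ((-1)^(k.natAbs) * (F j k : ℝ))
            * (((2*n).choose j : ℝ) * (F (2*n-j) k : ℝ) * (4*π^2/4^n)) := by
          rw [hs, hpow]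
      _ = (-1)^(k.natAbs) * (4*π^2/4^n)
            * (((2*n).choose j * F j k * F (2*n-j) k : ℕ) : ℝ) := by
          push_cast
          ring
  rw [Finset.sum_congr rfl step, ← Finset.mul_sum]
  have hc : ∑ j ∈ range (2*n+1), (((2*n).choose j * F j k * F (2*n-j) k : ℕ) : ℝ)
      = ((F (2*n) (k+k) * F (2*n) 0 : ℕ) : ℝ) := by
    rw [← Nat.cast_sum]
    norm_cast
    exact F_conv (2*n) k k |>.trans (by rw [show k - k = 0 by ring])
  rw [hc]
  have e1 : F (2*n) (k+k) = (2*n).choose (n + k.natAbs) := by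
    unfold F G
    have : (k+k).natAbs = 2 * k.natAbs := by omega
    rw [this, if_pos (by omega)]
    congr 1
    omega
  have e2 : F (2*n) 0 = (2*n).choose n := by
    unfold F G
    rw [if_pos (by omega)]
    congr 1
    omega
  rw [e1, e2]
  push_cast
  ring

lemma main_eq (k : ℤ) (t : ℝ) (ht : 0 ≤ t) :
    (∫ x in (-π)..π, ∫ y in (-π)..π,
        Real.cos (k*x) * Real.cos (k*y) * Real.exp (-(t/2)*(Real.cos x - Real.cos y)^2))
      = ∑' n : ℕ, ((-(t/2))^n / n.factorial)
          * ((-1:ℝ)^(k.natAbs) * (4*π^2/4^n)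
              * ((2*n).choose n : ℝ) * ((2*n).choose (n + k.natAbs) : ℝ)) := by
  have hle : -π ≤ π := by linarith [Real.pi_pos]
  set μ := volume.restrict (Set.Ioc (-π) π) with hμ
  set g : ℕ → ℝ → ℝ := fun n x => ((-(t/2))^n / n.factorial)
      * (Real.cos (k*x) * ∑ j ∈ range (2*n+1),
          ((2*n).choose j : ℝ) * (-1)^j * (Real.cos x)^(2*n-j) * (2*π*(F j k)/2^j))
      with hg
  have hrev : ∀ n : ℕ, ∀ x : ℝ,
      (∫ y in (-π)..π, Real.cos (k*x) * Real.cos (k*y) * (Real.cos x - Real.cos y)^(2*n))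
      = Real.cos (k*x) * ∑ j ∈ range (2*n+1),
          ((2*n).choose j : ℝ) * (-1)^j * (Real.cos x)^(2*n-j) * (2*π*(F j k)/2^j) := by
    intro n x
    calc (∫ y in (-π)..π, Real.cos (k*x) * Real.cos (k*y) * (Real.cos x - Real.cos y)^(2*n))
        = ∫ y in (-π)..π, Real.cos (k*x)
            * (Real.cos (k*y) * (Real.cos x - Real.cos y)^(2*n)) := by
          apply intervalIntegral.integral_congr
          intro y _
          ring
      _ = Real.cos (k*x) * ∫ y in (-π)..π,
            Real.cos (k*y) * (Real.cos x - Real.cos y)^(2*n) :=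
          intervalIntegral.integral_const_mul _ _
      _ = _ := by rw [inner_eval]
  have hinner : ∀ x : ℝ,
      (∫ y in (-π)..π,
        Real.cos (k*x) * Real.cos (k*y) * Real.exp (-(t/2)*(Real.cos x - Real.cos y)^2))
      = ∑' n : ℕ, g n x := by
    intro x
    rw [swap1 k t ht x]
    exact tsum_congr fun n => by rw [hg]; simp only []; rw [hrev n x]
  have hgcont : ∀ n : ℕ, Continuous (g n) := by
    intro n
    rw [hg]
    apply Continuous.mul continuous_const
    apply Continuous.mul (by fun_prop)
    apply continuous_finset_sum
    intro j _
    fun_prop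
  have hint : ∀ n : ℕ, Integrable (g n) μ := fun n => (hgcont n).integrableOn_Ioc
  have hbd : ∀ (n : ℕ) (x : ℝ), ‖g n x‖ ≤ 2*π*((2*t)^n / n.factorial) := by
    intro n x
    rw [hg]
    simp only []
    rw [← hrev n x, norm_mul]
    simp only [Real.norm_eq_abs]
    have hc : |((-(t/2))^n / (n.factorial:ℝ))| = (t/2)^n / n.factorial := by
      rw [abs_div, abs_pow, abs_neg, abs_of_nonneg (by linarith : (0:ℝ) ≤ t/2),
        abs_of_nonneg (by positivity : (0:ℝ) ≤ (n.factorial:ℝ))]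
    have hI : ‖∫ y in (-π)..π,
        Real.cos (k*x) * Real.cos (k*y) * (Real.cos x - Real.cos y)^(2*n)‖
        ≤ 4^n * |π - (-π)| := by
      apply intervalIntegral.norm_integral_le_of_norm_le_const
      intro y _
      have h1 : |Real.cos (k*x)| ≤ 1 := Real.abs_cos_le_one _
      have h2 : |Real.cos (k*y)| ≤ 1 := Real.abs_cos_le_one _
      have h4 : (Real.cos x - Real.cos y)^2 ≤ 4 := by
        have := Real.neg_one_le_cos x
        have := Real.cos_le_one x
        have := Real.neg_one_le_cos y
        have := Real.cos_le_one y
        nlinarith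
      have h5 : |(Real.cos x - Real.cos y)^(2*n)| ≤ 4^n := by
        rw [pow_mul, abs_pow]
        apply pow_le_pow_left₀ (abs_nonneg _)
        rw [abs_of_nonneg (sq_nonneg _)]; exact h4
      rw [Real.norm_eq_abs, abs_mul, abs_mul]
      calc |Real.cos (k*x)| * |Real.cos (k*y)| * |(Real.cos x - Real.cos y)^(2*n)|
          ≤ 1 * 1 * 4^n := by gcongr
        _ = 4^n := by ring
    rw [Real.norm_eq_abs] at hI
    calc |((-(t/2))^n / (n.factorial:ℝ))| * |∫ y in (-π)..π,
          Real.cos (↑k*x) * Real.cos (↑k*y) * (Real.cos x - Real.cos y)^(2*n)|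
        ≤ ((t/2)^n / n.factorial) * (4^n * |π - (-π)|) := by
          rw [hc]; gcongr
      _ = 2*π*((2*t)^n / n.factorial) := by
          rw [abs_of_nonneg (by linarith : (0:ℝ) ≤ π - (-π))]
          have h48 : ((t/2)^n : ℝ) * 4^n = (2*t)^n := by
            rw [← mul_pow]; congr 1; ring
          have e : (t/2)^n / (n.factorial:ℝ) * (4^n * (π - -π))
              = 2*π*(((t/2)^n * 4^n) / n.factorial) := by ring
          rw [e, h48]
  have hsum : Summable (fun n : ℕ => ∫ x, ‖g n x‖ ∂μ) := by
    apply Summable.of_nonneg_of_le (fun n => integral_nonneg (fun y => norm_nonneg _))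
      (fun n => ?_) (((Real.summable_pow_div_factorial (2*t)).mul_left (2*π)).mul_right (2*π))
    calc ∫ x, ‖g n x‖ ∂μ ≤ ∫ _, 2*π*((2*t)^n / n.factorial) ∂μ :=
        integral_mono (hint n).norm (integrable_const _) (fun x => hbd n x)
      _ = 2*π*((2*t)^n / n.factorial) * (2*π) := by
        rw [MeasureTheory.integral_const, hμ, measureReal_restrict_apply_univ, Real.volume_real_Ioc,
          smul_eq_mul, max_eq_left (by linarith : (0:ℝ) ≤ π - (-π))]
        ring
  have hswap := MeasureTheory.integral_tsum_of_summable_integral_norm hint hsum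
  rw [intervalIntegral.integral_of_le hle]
  have hrw : (∫ x in Set.Ioc (-π) π, ∫ y in (-π)..π,
      Real.cos (k*x) * Real.cos (k*y) * Real.exp (-(t/2)*(Real.cos x - Real.cos y)^2))
      = ∫ x, (∑' n, g n x) ∂μ := by
    rw [hμ]
    exact MeasureTheory.integral_congr_ae (Filter.Eventually.of_forall fun x => hinner x)
  rw [hrw, ← hswap]
  refine tsum_congr fun n => ?_
  have hterm : (∫ x, g n x ∂μ) = ((-(t/2))^n / n.factorial)
      * ∑ j ∈ range (2*n+1), ((2*n).choose j : ℝ) * (-1)^j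
          * (2*π*(F (2*n-j) k)/2^(2*n-j)) * (2*π*(F j k)/2^j) := by
    calc (∫ x, g n x ∂μ) = ∫ x in (-π)..π, g n x := by
          rw [intervalIntegral.integral_of_le hle, hμ]
      _ = ((-(t/2))^n / n.factorial) * ∫ x in (-π)..π,
            Real.cos (k*x) * ∑ j ∈ range (2*n+1),
              ((2*n).choose j : ℝ) * (-1)^j * (Real.cos x)^(2*n-j) * (2*π*(F j k)/2^j) := by
          rw [hg]
          exact intervalIntegral.integral_const_mul _ _
      _ = ((-(t/2))^n / n.factorial) * ∫ x in (-π)..π,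
            ∑ j ∈ range (2*n+1),
              (((2*n).choose j : ℝ) * (-1)^j * (2*π*(F j k)/2^j))
                * (Real.cos (k*x) * (Real.cos x)^(2*n-j)) := by
          congr 1
          apply intervalIntegral.integral_congr
          intro x _
          simp only [Finset.mul_sum]
          exact Finset.sum_congr rfl fun j _ => by ring
      _ = ((-(t/2))^n / n.factorial) * ∑ j ∈ range (2*n+1),
            (((2*n).choose j : ℝ) * (-1)^j * (2*π*(F j k)/2^j))
              * (2*π*(F (2*n-j) k)/2^(2*n-j)) := by
          rw [intervalIntegral.integral_finset_sum
            (fun j _ => ((cosIntegrable k (2*n-j)).const_mul _))]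
          congr 1
          exact Finset.sum_congr rfl fun j _ => by
            rw [intervalIntegral.integral_const_mul, intA]
      _ = _ := by
          congr 1
          exact Finset.sum_congr rfl fun j _ => by ring
  rw [hterm, sum_eval]

theorem stochastic_walk_prob_series (k : ℤ) (t : ℝ) (ht : 0 ≤ t) :
    (1 / (4 * π ^ 2)) *
        ∫ x in (-π)..π, ∫ y in (-π)..π,
          Real.cos (k * x) * Real.cos (k * y) *
            Real.exp (-(t / 2) * (Real.cos x - Real.cos y) ^ 2) =
      ∑' n : ℕ, if k.natAbs ≤ n then
          ((-1 : ℝ) ^ (n + k.natAbs) / 8 ^ n) * ((2 * n).choose n : ℝ) *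
            ((2 * n).choose (n + k.natAbs) : ℝ) * t ^ n / (n.factorial : ℝ)
        else 0 := by
  have hπ : (π:ℝ) ≠ 0 := Real.pi_ne_zero
  rw [main_eq k t ht, ← tsum_mul_left]
  refine tsum_congr fun n => ?_
  have hneg : (-(t/2))^n = (-1:ℝ)^n * t^n / 2^n := by
    rw [show -(t/2) = (-1) * t / 2 by ring, div_pow, mul_pow]
  have h8 : (8:ℝ)^n = 2^n * 4^n := by rw [← mul_pow]; norm_num
  rcases le_or_gt k.natAbs n with h | h
  · rw [if_pos h, hneg, pow_add]
    have h2 : (2:ℝ)^n ≠ 0 := by positivity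
    have h4 : (4:ℝ)^n ≠ 0 := by positivity
    field_simp
    rw [h8]
    ring
  · rw [if_neg (not_le.mpr h)]
    have : (2*n).choose (n + k.natAbs) = 0 :=
      Nat.choose_eq_zero_of_lt (by omega)
    rw [this]
    simp
end

section
/- Define for each integer k and t ≥ 0 the coefficient A_{n,k} = ((−1)^{n+k}/8^n)·C(2n,n)·C(2n,n+k) for n ≥ |k| and A_{n,k} = 0 otherwise. Then for every even natural number m ≥ 2, ∑_{k∈ℤ} k^m · ∑_{n≥0} A_{n,k} t^n/n! = ∑_{n=1}^{m/2} (1/8^n)·C(2n,n)·(t^n/n!)·∑_{j=0}^{2n} (−1)^j (j−n)^m C(2n,j); in particular this is a polynomial in t of degree m/2 with leading coefficient m!/((m/2)!·8^{m/2})·C(m, m/2). -/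
open Real Finset

lemma choose_le_two_pow' (N j : ℕ) : N.choose j ≤ 2 ^ N := by
  rcases le_or_gt j N with h | h
  · calc N.choose j ≤ ∑ i ∈ Finset.range (N + 1), N.choose i :=
        Finset.single_le_sum (f := fun i => N.choose i) (fun _ _ => Nat.zero_le _)
          (Finset.mem_range.2 (Nat.lt_succ_of_le h))
      _ = 2 ^ N := Nat.sum_range_choose N
  · simp [Nat.choose_eq_zero_of_lt h]

lemma alt_sum : ∀ (N p : ℕ), p ≤ N → ∀ x : ℝ,
    ∑ j ∈ Finset.range (N + 1), (-1 : ℝ) ^ j * ((j : ℝ) + x) ^ p * (N.choose j : ℝ)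
      = if p = N then (-1 : ℝ) ^ N * N.factorial else 0 := by
  intro N
  induction N with
  | zero => intro p hp x; interval_cases p; simp
  | succ N ih =>
    intro p hp x
    set f : ℕ → ℝ := fun j => (-1 : ℝ) ^ j * ((j : ℝ) + x) ^ p * (N.choose j : ℝ) with hf
    have key : ∑ j ∈ Finset.range (N + 2), (-1 : ℝ) ^ j * ((j : ℝ) + x) ^ p * ((N+1).choose j : ℝ)
        = ∑ j ∈ Finset.range (N + 1),
            (-1 : ℝ) ^ j * (((j : ℝ) + x) ^ p - (((j : ℝ) + 1) + x) ^ p) * (N.choose j : ℝ) := by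
      rw [Finset.sum_range_succ'
        (fun j => (-1 : ℝ) ^ j * ((j : ℝ) + x) ^ p * ((N+1).choose j : ℝ)) (N+1)]
      have pascal : ∀ i : ℕ, (((N+1).choose (i+1) : ℕ) : ℝ)
          = (N.choose i : ℝ) + (N.choose (i+1) : ℝ) := by
        intro i; rw [Nat.choose_succ_succ]; push_cast; ring
      have hsplit : ∀ i : ℕ,
          (-1 : ℝ) ^ (i+1) * (((i+1 : ℕ) : ℝ) + x) ^ p * (((N+1).choose (i+1) : ℕ) : ℝ)
            = (-1 : ℝ) ^ (i+1) * ((((i : ℕ) : ℝ) + 1) + x) ^ p * (N.choose i : ℝ) + f (i+1) := by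
        intro i
        rw [pascal, hf]
        push_cast
        ring
      rw [Finset.sum_congr rfl (fun i _ => hsplit i), Finset.sum_add_distrib]
      have h1 : ∑ i ∈ Finset.range (N + 1), f (i+1)
          = ∑ j ∈ Finset.range (N + 1), f j + f (N+1) - f 0 := by
        have h0 := Finset.sum_range_succ' f (N+1)
        have h2 := Finset.sum_range_succ f (N+1)
        rw [h2] at h0
        linarith [h0]
      have hfN1 : f (N+1) = 0 := by
        simp [hf, Nat.choose_succ_self]
      have hf0 : f 0 = (-1 : ℝ) ^ (0:ℕ) * (((0:ℕ) : ℝ) + x) ^ p * (((N+1).choose 0 : ℕ) : ℝ) := by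
        simp [hf]
      have hneg : ∑ i ∈ Finset.range (N+1), (-1:ℝ)^(i+1) * (((i:ℕ):ℝ)+1+x)^p * (N.choose i : ℝ)
          = -∑ i ∈ Finset.range (N+1), (-1:ℝ)^i * (((i:ℕ):ℝ)+1+x)^p * (N.choose i : ℝ) := by
        rw [← Finset.sum_neg_distrib]
        exact Finset.sum_congr rfl fun i _ => by ring
      rw [h1, hfN1, ← hf0, hf]
      simp only [mul_sub, sub_mul]
      rw [Finset.sum_sub_distrib, hneg]
      ring
    have hdiff : ∀ y : ℝ, (y + 1) ^ p - y ^ p = ∑ i ∈ Finset.range p, y ^ i * (p.choose i : ℝ) := by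
      intro y
      have h := add_pow y 1 p
      simp only [one_pow, mul_one] at h
      rw [Finset.sum_range_succ] at h
      simp only [Nat.choose_self, Nat.cast_one, mul_one] at h
      linarith [h]
    have key2 : ∑ j ∈ Finset.range (N + 2), (-1 : ℝ) ^ j * ((j : ℝ) + x) ^ p * ((N+1).choose j : ℝ)
        = - ∑ i ∈ Finset.range p, (p.choose i : ℝ) *
            ∑ j ∈ Finset.range (N + 1), (-1 : ℝ) ^ j * ((j : ℝ) + x) ^ i * (N.choose j : ℝ) := by
      rw [key]
      have hterm : ∀ j : ℕ,
          (-1 : ℝ) ^ j * (((j : ℝ) + x) ^ p - (((j : ℝ) + 1) + x) ^ p) * (N.choose j : ℝ)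
            = ∑ i ∈ Finset.range p,
                -((p.choose i : ℝ) * ((-1 : ℝ) ^ j * ((j : ℝ) + x) ^ i * (N.choose j : ℝ))) := by
        intro j
        have hd : ((j : ℝ) + x) ^ p - (((j : ℝ) + 1) + x) ^ p
            = -∑ i ∈ Finset.range p, ((j : ℝ) + x) ^ i * (p.choose i : ℝ) := by
          rw [← hdiff ((j : ℝ) + x)]; ring
        rw [hd, mul_neg, neg_mul, Finset.mul_sum, Finset.sum_mul, ← Finset.sum_neg_distrib]
        exact Finset.sum_congr rfl fun i _ => by ring
      rw [Finset.sum_congr rfl (fun j _ => hterm j), Finset.sum_comm, ← Finset.sum_neg_distrib]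
      apply Finset.sum_congr rfl
      intro i _
      rw [Finset.mul_sum, ← Finset.sum_neg_distrib]
    rw [show N + 1 + 1 = N + 2 from rfl] at *
    rw [key2]
    have hih : ∀ i ∈ Finset.range p,
        (p.choose i : ℝ) * ∑ j ∈ Finset.range (N + 1),
            (-1 : ℝ) ^ j * ((j : ℝ) + x) ^ i * (N.choose j : ℝ)
          = (p.choose i : ℝ) * (if i = N then (-1 : ℝ) ^ N * N.factorial else 0) := by
      intro i hi
      rw [ih i (by rw [Finset.mem_range] at hi; omega) x]
    rw [Finset.sum_congr rfl hih]
    rcases eq_or_lt_of_le hp with hpN | hpN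
    · subst hpN
      rw [if_pos rfl]
      simp only [mul_ite, mul_zero]
      rw [Finset.sum_ite_eq' (Finset.range (N+1)) N
        (fun i => (((N+1).choose i : ℕ) : ℝ) * ((-1 : ℝ) ^ N * N.factorial))]
      rw [if_pos (Finset.mem_range.2 (Nat.lt_succ_self N))]
      rw [Nat.choose_succ_self_right, Nat.factorial_succ]
      push_cast
      ring
    · have hple : p ≤ N := by omega
      rw [if_neg (by omega)]
      rw [Finset.sum_congr rfl (fun i hi => by
        rw [if_neg (by rw [Finset.mem_range] at hi; omega), mul_zero])]
      simp

/-- The Taylor coefficient `A_{n,k}` of the purely dissipative walk distribution. -/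
noncomputable def walkCoeff (n : ℕ) (k : ℤ) : ℝ :=
  if k.natAbs ≤ n then
    ((-1 : ℝ) ^ (n + k.natAbs) / 8 ^ n) * ((2 * n).choose n : ℝ) *
      ((2 * n).choose (n + k.natAbs) : ℝ)
  else 0

theorem moments_purely_dissipative (m : ℕ) (hm : Even m) (hm2 : 2 ≤ m)
    (t : ℝ) (ht : 0 ≤ t) :
    (∑' k : ℤ, (k : ℝ) ^ m *
        ∑' n : ℕ, walkCoeff n k * t ^ n / (n.factorial : ℝ)) =
      ∑ n ∈ Finset.Icc 1 (m / 2),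
        (1 / 8 ^ n) * ((2 * n).choose n : ℝ) * (t ^ n / (n.factorial : ℝ)) *
          ∑ j ∈ Finset.range (2 * n + 1),
            (-1 : ℝ) ^ j * ((j : ℝ) - (n : ℝ)) ^ m * ((2 * n).choose j : ℝ) ∧
    (1 / 8 ^ (m / 2)) * ((2 * (m / 2)).choose (m / 2) : ℝ) * (1 / ((m / 2).factorial : ℝ)) *
        ∑ j ∈ Finset.range (2 * (m / 2) + 1),
          (-1 : ℝ) ^ j * ((j : ℝ) - ((m / 2 : ℕ) : ℝ)) ^ m * ((2 * (m / 2)).choose j : ℝ) =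
      (m.factorial : ℝ) / (((m / 2).factorial : ℝ) * 8 ^ (m / 2)) * (m.choose (m / 2) : ℝ) := by
  have hq : 2 * (m / 2) = m := by
    have := hm.two_dvd
    omega
  constructor
  · -- main identity
    set F : ℤ → ℕ → ℝ := fun k n => (k : ℝ) ^ m * (walkCoeff n k * t ^ n / (n.factorial : ℝ))
      with hF
    have hwc_bound : ∀ (n : ℕ) (k : ℤ), |walkCoeff n k| ≤ 2 ^ n := by
      intro n k
      unfold walkCoeff
      split_ifs with h
      · have h1 : (((2 * n).choose n : ℕ) : ℝ) ≤ 4 ^ n := by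
          have h' := choose_le_two_pow' (2 * n) n
          calc (((2 * n).choose n : ℕ) : ℝ) ≤ ((2 ^ (2 * n) : ℕ) : ℝ) := by exact_mod_cast h'
            _ = 4 ^ n := by push_cast; rw [pow_mul]; norm_num
        have h2 : (((2 * n).choose (n + k.natAbs) : ℕ) : ℝ) ≤ 4 ^ n := by
          have h' := choose_le_two_pow' (2 * n) (n + k.natAbs)
          calc (((2 * n).choose (n + k.natAbs) : ℕ) : ℝ) ≤ ((2 ^ (2 * n) : ℕ) : ℝ) := by
                exact_mod_cast h'
            _ = 4 ^ n := by push_cast; rw [pow_mul]; norm_num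
        have habs : |(-1 : ℝ) ^ (n + k.natAbs) / 8 ^ n * ((2 * n).choose n : ℝ) *
            ((2 * n).choose (n + k.natAbs) : ℝ)|
            = (1 / 8 ^ n) * ((2 * n).choose n : ℝ) * ((2 * n).choose (n + k.natAbs) : ℝ) := by
          simp [abs_mul, abs_div, abs_pow, Nat.abs_cast]
        rw [habs]
        have h8 : (0:ℝ) < 8 ^ n := by positivity
        rw [div_mul_eq_mul_div, div_mul_eq_mul_div, one_mul, div_le_iff₀ h8]
        calc ((2 * n).choose n : ℝ) * ((2 * n).choose (n + k.natAbs) : ℝ)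
            ≤ 4 ^ n * 4 ^ n := mul_le_mul h1 h2 (by positivity) (by positivity)
          _ = 2 ^ n * 8 ^ n := by rw [← mul_pow, ← mul_pow]; norm_num
      · simp only [abs_zero]; positivity
    have hwc_zero : ∀ (n : ℕ) (k : ℤ), n < k.natAbs → walkCoeff n k = 0 := by
      intro n k h
      unfold walkCoeff
      rw [if_neg (by omega)]
    have hslice0 : ∀ n : ℕ, ∀ k ∉ Finset.Icc (-(n:ℤ)) (n:ℤ), F k n = 0 := by
      intro n k hk
      rw [Finset.mem_Icc] at hk
      have : n < k.natAbs := by omega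
      rw [hF]
      simp [hwc_zero n k this]
    have hterm_bound : ∀ n : ℕ, ∀ k ∈ Finset.Icc (-(n:ℤ)) (n:ℤ),
        |F k n| ≤ (n : ℝ) ^ m * 2 ^ n * t ^ n / (n.factorial : ℝ) := by
      intro n k hk
      rw [Finset.mem_Icc] at hk
      have hkn : |(k : ℝ)| ≤ (n : ℝ) := by
        rw [← Int.cast_abs]
        exact_mod_cast abs_le.mpr ⟨hk.1, hk.2⟩
      have h1 : |(k : ℝ)| ^ m ≤ (n : ℝ) ^ m :=
        pow_le_pow_left₀ (abs_nonneg _) hkn m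
      have hfac : (0:ℝ) < (n.factorial : ℝ) := by exact_mod_cast n.factorial_pos
      have : |F k n| = |(k : ℝ)| ^ m * (|walkCoeff n k| * t ^ n / (n.factorial : ℝ)) := by
        rw [hF]
        simp only []
        rw [abs_mul, abs_div, abs_mul, abs_pow, abs_pow, abs_of_nonneg ht, Nat.abs_cast]
      rw [this]
      have h2 : |walkCoeff n k| * t ^ n / (n.factorial : ℝ)
          ≤ 2 ^ n * t ^ n / (n.factorial : ℝ) := by
        gcongr
        exact hwc_bound n k
      calc |(k : ℝ)| ^ m * (|walkCoeff n k| * t ^ n / (n.factorial : ℝ))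
          ≤ (n : ℝ) ^ m * (2 ^ n * t ^ n / (n.factorial : ℝ)) := by
            apply mul_le_mul h1 h2 (by positivity) (by positivity)
        _ = (n : ℝ) ^ m * 2 ^ n * t ^ n / (n.factorial : ℝ) := by ring
    have hsummable_abs_slice : ∀ n : ℕ, Summable (fun k : ℤ => |F k n|) := by
      intro n
      apply summable_of_ne_finset_zero (s := Finset.Icc (-(n:ℤ)) (n:ℤ))
      intro k hk
      rw [hslice0 n k hk, abs_zero]
    have hcard : ∀ n : ℕ, (Finset.Icc (-(n:ℤ)) (n:ℤ)).card = 2 * n + 1 := by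
      intro n
      rw [Int.card_Icc]
      omega
    have hslice_le : ∀ n : ℕ, ∑' k : ℤ, |F k n|
        ≤ ((2 * n + 1 : ℕ) : ℝ) * ((n : ℝ) ^ m * 2 ^ n * t ^ n / (n.factorial : ℝ)) := by
      intro n
      rw [tsum_eq_sum (s := Finset.Icc (-(n:ℤ)) (n:ℤ))
        (fun k hk => by rw [hslice0 n k hk, abs_zero])]
      calc ∑ k ∈ Finset.Icc (-(n:ℤ)) (n:ℤ), |F k n|
          ≤ (Finset.Icc (-(n:ℤ)) (n:ℤ)).card •
              ((n : ℝ) ^ m * 2 ^ n * t ^ n / (n.factorial : ℝ)) :=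
            Finset.sum_le_card_nsmul _ _ _ (hterm_bound n)
        _ = ((2 * n + 1 : ℕ) : ℝ) * ((n : ℝ) ^ m * 2 ^ n * t ^ n / (n.factorial : ℝ)) := by
            rw [hcard n, nsmul_eq_mul]
    have hmaj : Summable (fun n : ℕ => 3 * ((4 * t) ^ n / (n.factorial : ℝ))) :=
      (Real.summable_pow_div_factorial (4 * t)).mul_left 3
    have hev2 : ∀ᶠ n : ℕ in Filter.atTop, ((n : ℝ)) ^ (m + 1) ≤ 2 ^ n := by
      have h := tendsto_pow_const_div_const_pow_of_one_lt (m + 1)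
        (by norm_num : (1:ℝ) < 2)
      filter_upwards [h.eventually_lt_const one_pos] with n hn
      have h2 : (0:ℝ) < 2 ^ n := by positivity
      rw [div_lt_one h2] at hn
      exact hn.le
    have hev : ∀ᶠ n : ℕ in Filter.atTop,
        ((2 * n + 1 : ℕ) : ℝ) * ((n : ℝ) ^ m * 2 ^ n * t ^ n / (n.factorial : ℝ))
          ≤ 3 * ((4 * t) ^ n / (n.factorial : ℝ)) := by
      filter_upwards [hev2, Filter.eventually_ge_atTop 1] with n h1 h2
      have hn1 : (1:ℝ) ≤ (n : ℝ) := by exact_mod_cast h2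
      have hfac : (0:ℝ) < (n.factorial : ℝ) := by exact_mod_cast n.factorial_pos
      have e3 : ((2 * n + 1 : ℕ) : ℝ) * (n : ℝ) ^ m ≤ 3 * (n : ℝ) ^ (m + 1) := by
        rw [pow_succ]
        push_cast
        nlinarith [pow_nonneg (show (0:ℝ) ≤ (n:ℝ) by linarith) m]
      have h4 : (4 * t) ^ n = 2 ^ n * (2 ^ n * t ^ n) := by
        rw [show (4 : ℝ) * t = 2 * (2 * t) by ring, mul_pow, mul_pow]
      calc ((2 * n + 1 : ℕ) : ℝ) * ((n : ℝ) ^ m * 2 ^ n * t ^ n / (n.factorial : ℝ))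
          = (((2 * n + 1 : ℕ) : ℝ) * (n : ℝ) ^ m) * (2 ^ n * t ^ n) / (n.factorial : ℝ) := by
            ring
        _ ≤ (3 * (n : ℝ) ^ (m + 1)) * (2 ^ n * t ^ n) / (n.factorial : ℝ) := by
            gcongr
        _ ≤ (3 * 2 ^ n) * (2 ^ n * t ^ n) / (n.factorial : ℝ) := by
            gcongr
        _ = 3 * ((4 * t) ^ n / (n.factorial : ℝ)) := by rw [h4]; ring
    have hsumG : Summable (fun n : ℕ => ∑' k : ℤ, |F k n|) := by
      apply Summable.of_norm_bounded_eventually_nat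
        (g := fun n => 3 * ((4 * t) ^ n / (n.factorial : ℝ))) hmaj
      filter_upwards [hev] with n hn
      have hpos : (0:ℝ) ≤ ∑' k : ℤ, |F k n| := tsum_nonneg fun k => abs_nonneg _
      rw [Real.norm_eq_abs, abs_of_nonneg hpos]
      exact (hslice_le n).trans hn
    have hG : Summable (fun p : ℕ × ℤ => |F p.2 p.1|) := by
      rw [summable_prod_of_nonneg (fun p => abs_nonneg _)]
      exact ⟨fun n => hsummable_abs_slice n, hsumG⟩
    have hFsum : Summable (Function.uncurry F) := by
      rw [← summable_abs_iff]
      exact ((Equiv.prodComm ℤ ℕ).summable_iff (f := fun p : ℕ × ℤ => |F p.2 p.1|)).2 hG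
    -- rewrite LHS
    have step0 : (∑' k : ℤ, (k : ℝ) ^ m *
        ∑' n : ℕ, walkCoeff n k * t ^ n / (n.factorial : ℝ)) = ∑' (k : ℤ) (n : ℕ), F k n := by
      apply tsum_congr
      intro k
      rw [hF]
      exact (tsum_mul_left).symm
    have hswap : ∑' (k : ℤ) (n : ℕ), F k n = ∑' (n : ℕ) (k : ℤ), F k n :=
      (Summable.tsum_comm hFsum).symm
    -- evaluate each inner sum over k
    have step4 : ∀ n : ℕ, (∑' k : ℤ, F k n)
        = (1 / 8 ^ n) * ((2 * n).choose n : ℝ) * (t ^ n / (n.factorial : ℝ)) *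
            ∑ j ∈ Finset.range (2 * n + 1),
              (-1 : ℝ) ^ j * ((j : ℝ) - (n : ℝ)) ^ m * ((2 * n).choose j : ℝ) := by
      intro n
      rw [tsum_eq_sum (s := Finset.Icc (-(n:ℤ)) (n:ℤ)) (hslice0 n)]
      rw [Finset.mul_sum]
      apply Finset.sum_nbij' (i := fun k : ℤ => (k + n).toNat) (j := fun j : ℕ => (j : ℤ) - n)
      · intro k hk
        rw [Finset.mem_Icc] at hk
        rw [Finset.mem_range]
        omega
      · intro j hj
        rw [Finset.mem_range] at hj
        rw [Finset.mem_Icc]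
        omega
      · intro k hk
        rw [Finset.mem_Icc] at hk
        omega
      · intro j hj
        rw [Finset.mem_range] at hj
        omega
      · intro k hk
        rw [Finset.mem_Icc] at hk
        set a := k.natAbs with ha
        set j := (k + n).toNat with hjdef
        have han : a ≤ n := by omega
        have hjk : ((j : ℕ) : ℤ) = k + n := by omega
        have hkj : ((j : ℕ) : ℝ) - (n : ℝ) = (k : ℝ) := by
          have : ((j : ℕ) : ℝ) = (k : ℝ) + (n : ℝ) := by exact_mod_cast congrArg Int.cast hjk
          linarith
        have hC : (((2 * n).choose j : ℕ) : ℝ) = (((2 * n).choose (n + a) : ℕ) : ℝ) := by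
          rcases le_or_gt 0 k with hk0 | hk0
          · have : j = n + a := by omega
            rw [this]
          · have hj' : j = n - a := by omega
            have h2 : n - a = 2 * n - (n + a) := by omega
            rw [hj', h2, Nat.choose_symm (by omega)]
        have hsign : (-1 : ℝ) ^ j = (-1 : ℝ) ^ (n + a) := by
          rcases le_or_gt 0 k with hk0 | hk0
          · have : j = n + a := by omega
            rw [this]
          · have hj' : j = n - a := by omega
            have h2 : n + a = (n - a) + 2 * a := by omega
            rw [hj', h2, pow_add, pow_mul, neg_one_sq, one_pow, mul_one]
        have hwc : walkCoeff n k = ((-1 : ℝ) ^ (n + a) / 8 ^ n) * ((2 * n).choose n : ℝ) *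
            ((2 * n).choose (n + a) : ℝ) := by
          unfold walkCoeff
          rw [if_pos han]
        rw [hF]
        simp only []
        rw [hwc, hsign, hC, ← hkj]
        ring
    -- the terms vanish outside Icc 1 (m/2)
    have step5 : ∀ n : ℕ, n ∉ Finset.Icc 1 (m / 2) →
        (1 / 8 ^ n) * ((2 * n).choose n : ℝ) * (t ^ n / (n.factorial : ℝ)) *
            ∑ j ∈ Finset.range (2 * n + 1),
              (-1 : ℝ) ^ j * ((j : ℝ) - (n : ℝ)) ^ m * ((2 * n).choose j : ℝ) = 0 := by
      intro n hn
      rw [Finset.mem_Icc] at hn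
      rcases Nat.eq_zero_or_pos n with h0 | h0
      · subst h0
        have : ∑ j ∈ Finset.range (2 * 0 + 1),
            (-1 : ℝ) ^ j * ((j : ℝ) - ((0:ℕ) : ℝ)) ^ m * ((2 * 0).choose j : ℝ) = 0 := by
          simp [zero_pow (by omega : m ≠ 0)]
        rw [this, mul_zero]
      · have hmn : m < 2 * n := by omega
        have halt := alt_sum (2 * n) m (by omega) (-(n : ℝ))
        simp only [← sub_eq_add_neg] at halt
        rw [halt, if_neg (by omega), mul_zero]
    rw [step0, hswap, tsum_congr step4]
    exact tsum_eq_sum step5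
  · -- the leading coefficient
    rw [hq]
    have halt := alt_sum m m le_rfl (-((m / 2 : ℕ) : ℝ))
    simp only [← sub_eq_add_neg] at halt
    rw [halt, if_pos trivial, hm.neg_one_pow, one_mul]
    have h8 : (8 : ℝ) ^ (m / 2) ≠ 0 := by positivity
    have hf : ((m / 2).factorial : ℝ) ≠ 0 := by
      exact_mod_cast (m / 2).factorial_ne_zero
    field_simp
end

section
/- For m = 2 the formula of the previous family specializes to: ∑_{k∈ℤ} k² · ∑_{n≥|k|} ((−1)^{n+k}/8^n)·C(2n,n)·C(2n,n+k)·t^n/n! = t/2 for all t ≥ 0. -/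
open Real Finset

private lemma choose_le_four_pow (n i : ℕ) : ((2 * n).choose i : ℝ) ≤ 4 ^ n := by
  have h : (2 * n).choose i ≤ 4 ^ n := by
    rcases le_or_gt i (2 * n) with h | h
    · calc (2 * n).choose i ≤ ∑ m ∈ range (2 * n + 1), (2 * n).choose m :=
          Finset.single_le_sum (fun m _ => Nat.zero_le _) (Finset.mem_range.2 (by omega))
        _ = 2 ^ (2 * n) := Nat.sum_range_choose _
        _ = 4 ^ n := by rw [pow_mul]; norm_num
    · simp [Nat.choose_eq_zero_of_lt h]
  exact_mod_cast h

private lemma alt0 (N : ℕ) :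
    ∑ m ∈ range (N + 1), (-1 : ℝ) ^ m * (N.choose m : ℝ) = if N = 0 then 1 else 0 := by
  have h := Int.alternating_sum_range_choose (n := N)
  have h2 : ((∑ m ∈ range (N + 1), (-1 : ℤ) ^ m * (N.choose m : ℤ) : ℤ) : ℝ)
      = (((if N = 0 then 1 else 0 : ℤ)) : ℝ) := by rw [h]
  push_cast at h2
  simpa using h2

private lemma alt1 (N : ℕ) :
    ∑ m ∈ range (N + 1), (-1 : ℝ) ^ m * (m : ℝ) * (N.choose m : ℝ)
      = if N = 1 then -1 else 0 := by
  cases N with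
  | zero => simp
  | succ M =>
    rw [Finset.sum_range_succ']
    have hterm : ∀ i ∈ range (M + 1),
        (-1 : ℝ) ^ (i + 1) * ((i + 1 : ℕ) : ℝ) * ((M + 1).choose (i + 1) : ℝ)
          = (-((M : ℝ) + 1)) * ((-1 : ℝ) ^ i * (M.choose i : ℝ)) := by
      intro i _
      have hc : ((M : ℝ) + 1) * (M.choose i : ℝ)
          = ((M + 1).choose (i + 1) : ℝ) * ((i : ℝ) + 1) := by
        exact_mod_cast congrArg (Nat.cast : ℕ → ℝ) (Nat.add_one_mul_choose_eq M i)
      push_cast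
      rw [pow_succ]
      linear_combination ((-1 : ℝ) ^ i) * hc
    rw [Finset.sum_congr rfl hterm, ← Finset.mul_sum, alt0]
    rcases Nat.eq_zero_or_pos M with rfl | hM
    · norm_num
    · have : M ≠ 0 := by omega
      have : M + 1 ≠ 1 := by omega
      simp [*]

private lemma alt2 (N : ℕ) :
    ∑ m ∈ range (N + 1), (-1 : ℝ) ^ m * (m : ℝ) * ((m : ℝ) - 1) * (N.choose m : ℝ)
      = if N = 2 then 2 else 0 := by
  match N with
  | 0 => simp
  | 1 => rw [Finset.sum_range_succ, Finset.sum_range_succ]; norm_num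
  | (M + 2) =>
    rw [Finset.sum_range_succ', Finset.sum_range_succ']
    have hterm : ∀ j ∈ range (M + 1),
        (-1 : ℝ) ^ (j + 1 + 1) * ((j + 1 + 1 : ℕ) : ℝ) * (((j + 1 + 1 : ℕ) : ℝ) - 1) *
            ((M + 2).choose (j + 1 + 1) : ℝ)
          = ((M : ℝ) + 2) * ((M : ℝ) + 1) * ((-1 : ℝ) ^ j * (M.choose j : ℝ)) := by
      intro j _
      have hc1 : ((M : ℝ) + 2) * ((M + 1).choose (j + 1) : ℝ)
          = ((M + 2).choose (j + 2) : ℝ) * ((j : ℝ) + 2) := by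
        exact_mod_cast congrArg (Nat.cast : ℕ → ℝ) (Nat.add_one_mul_choose_eq (M + 1) (j + 1))
      have hc2 : ((M : ℝ) + 1) * (M.choose j : ℝ)
          = ((M + 1).choose (j + 1) : ℝ) * ((j : ℝ) + 1) := by
        exact_mod_cast congrArg (Nat.cast : ℕ → ℝ) (Nat.add_one_mul_choose_eq M j)
      push_cast
      rw [pow_succ, pow_succ]
      linear_combination (-(-1 : ℝ) ^ j * ((j : ℝ) + 1)) * hc1
        + (-(-1 : ℝ) ^ j * ((M : ℝ) + 2)) * hc2
    rw [Finset.sum_congr rfl hterm, ← Finset.mul_sum, alt0]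
    rcases Nat.eq_zero_or_pos M with rfl | hM
    · norm_num
    · have h1 : M ≠ 0 := by omega
      have h2 : M + 2 ≠ 2 := by omega
      simp [h1, h2]

private lemma keysum (n : ℕ) :
    ∑ m ∈ range (2 * n + 1), (-1 : ℝ) ^ m * ((m : ℝ) - (n : ℝ)) ^ 2 * ((2 * n).choose m : ℝ)
      = if n = 1 then 2 else 0 := by
  have hsplit : ∑ m ∈ range (2 * n + 1),
        (-1 : ℝ) ^ m * ((m : ℝ) - (n : ℝ)) ^ 2 * ((2 * n).choose m : ℝ)
      = (∑ m ∈ range (2 * n + 1), (-1 : ℝ) ^ m * (m : ℝ) * ((m : ℝ) - 1) * ((2 * n).choose m : ℝ))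
        + ((1 : ℝ) - 2 * n) * (∑ m ∈ range (2 * n + 1), (-1 : ℝ) ^ m * (m : ℝ) * ((2 * n).choose m : ℝ))
        + ((n : ℝ)) ^ 2 * (∑ m ∈ range (2 * n + 1), (-1 : ℝ) ^ m * ((2 * n).choose m : ℝ)) := by
    rw [Finset.mul_sum, Finset.mul_sum, ← Finset.sum_add_distrib, ← Finset.sum_add_distrib]
    refine Finset.sum_congr rfl fun m _ => by ring
  rw [hsplit, alt2, alt1, alt0]
  rcases n with _ | _ | n <;> norm_num

private lemma icc_eq_map (n : ℕ) :
    Finset.Icc (-(n : ℤ)) (n : ℤ)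
      = Finset.map ⟨fun m : ℕ => (m : ℤ) - n, (show Function.Injective (fun m : ℕ => (m : ℤ) - n) from fun a b h => by dsimp at h; omega)⟩ (range (2 * n + 1)) := by
  ext k
  simp only [Finset.mem_Icc, Finset.mem_map, Finset.mem_range, Function.Embedding.coeFn_mk]
  constructor
  · intro h
    exact ⟨(k + n).toNat, by omega, by omega⟩
  · rintro ⟨m, hm, rfl⟩
    omega

private noncomputable def Fterm (t : ℝ) (k : ℤ) (n : ℕ) : ℝ :=
  (k : ℝ) ^ 2 * (if k.natAbs ≤ n then
      ((-1 : ℝ) ^ (n + k.natAbs) / 8 ^ n) * ((2 * n).choose n : ℝ) *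
        ((2 * n).choose (n + k.natAbs) : ℝ) * t ^ n / (n.factorial : ℝ)
    else 0)

private lemma Fterm_vanish (t : ℝ) (n : ℕ) :
    ∀ k ∉ Finset.Icc (-(n : ℤ)) (n : ℤ), Fterm t k n = 0 := by
  intro k hk
  have h : ¬ k.natAbs ≤ n := by
    simp only [Finset.mem_Icc] at hk; omega
  simp [Fterm, h]

private lemma inner_eq (t : ℝ) (n : ℕ) :
    ∑' k : ℤ, Fterm t k n = if n = 1 then t / 2 else 0 := by
  rw [tsum_eq_sum (Fterm_vanish t n), icc_eq_map, Finset.sum_map]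
  simp only [Function.Embedding.coeFn_mk]
  have hterm : ∀ m ∈ range (2 * n + 1),
      Fterm t ((m : ℤ) - n) n
        = ((2 * n).choose n : ℝ) * t ^ n / (8 ^ n * (n.factorial : ℝ))
            * ((-1 : ℝ) ^ m * ((m : ℝ) - (n : ℝ)) ^ 2 * ((2 * n).choose m : ℝ)) := by
    intro m hm
    have hm' : m ≤ 2 * n := by simp only [Finset.mem_range] at hm; omega
    have hab : (((m : ℤ) - n).natAbs) ≤ n := by omega
    have hsq : ((((m : ℤ) - n : ℤ)) : ℝ) ^ 2 = ((m : ℝ) - (n : ℝ)) ^ 2 := by push_cast; ring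
    have hsign : (-1 : ℝ) ^ (n + ((m : ℤ) - n).natAbs) = (-1 : ℝ) ^ m := by
      rw [neg_one_pow_eq_pow_mod_two, neg_one_pow_eq_pow_mod_two (n := m)]
      congr 1
      omega
    have hchoose : ((2 * n).choose (n + ((m : ℤ) - n).natAbs)) = (2 * n).choose m := by
      rcases le_total m n with h | h
      · have he : n + ((m : ℤ) - n).natAbs = 2 * n - m := by omega
        rw [he, Nat.choose_symm hm']
      · have he : n + ((m : ℤ) - n).natAbs = m := by omega
        rw [he]
    rw [Fterm, if_pos hab, hsq, hsign, hchoose]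
    ring
  rw [Finset.sum_congr rfl hterm, ← Finset.mul_sum, keysum]
  rcases eq_or_ne n 1 with rfl | hn
  · norm_num [Nat.choose]
    ring
  · simp [hn]

private lemma Fterm_abs_le (t : ℝ) (ht : 0 ≤ t) (k : ℤ) (n : ℕ) (hk : k.natAbs ≤ n) :
    |Fterm t k n| ≤ (8 * t) ^ n / (n.factorial : ℝ) := by
  have htn : (0 : ℝ) ≤ t ^ n := pow_nonneg ht n
  have hnn : (0 : ℝ) ≤ (k : ℝ) ^ 2 * (((2 * n).choose n : ℝ) * ((2 * n).choose (n + k.natAbs) : ℝ)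
      * t ^ n) / (8 ^ n * (n.factorial : ℝ)) := by
    apply div_nonneg
    · exact mul_nonneg (sq_nonneg _) (mul_nonneg (mul_nonneg (Nat.cast_nonneg _) (Nat.cast_nonneg _)) htn)
    · positivity
  have habs : |Fterm t k n|
      = (k : ℝ) ^ 2 * (((2 * n).choose n : ℝ) * ((2 * n).choose (n + k.natAbs) : ℝ) * t ^ n)
        / (8 ^ n * (n.factorial : ℝ)) := by
    rcases Nat.even_or_odd (n + k.natAbs) with h | h
    · rw [Fterm, if_pos hk, Even.neg_one_pow h]
      rw [show ((k : ℝ) ^ 2 * ((1 : ℝ) / 8 ^ n * ((2 * n).choose n : ℝ) *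
          ((2 * n).choose (n + k.natAbs) : ℝ) * t ^ n / (n.factorial : ℝ)))
        = (k : ℝ) ^ 2 * (((2 * n).choose n : ℝ) * ((2 * n).choose (n + k.natAbs) : ℝ) * t ^ n)
          / (8 ^ n * (n.factorial : ℝ)) from by ring]
      exact abs_of_nonneg hnn
    · rw [Fterm, if_pos hk, Odd.neg_one_pow h]
      rw [show ((k : ℝ) ^ 2 * ((-1 : ℝ) / 8 ^ n * ((2 * n).choose n : ℝ) *
          ((2 * n).choose (n + k.natAbs) : ℝ) * t ^ n / (n.factorial : ℝ)))
        = -((k : ℝ) ^ 2 * (((2 * n).choose n : ℝ) * ((2 * n).choose (n + k.natAbs) : ℝ) * t ^ n)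
          / (8 ^ n * (n.factorial : ℝ))) from by ring]
      rw [abs_neg]
      exact abs_of_nonneg hnn
  rw [habs]
  have hk2 : (k : ℝ) ^ 2 ≤ (4 : ℝ) ^ n := by
    have h1 : ((k.natAbs : ℝ)) ^ 2 = (k : ℝ) ^ 2 := by
      rw [Nat.cast_natAbs, Int.cast_abs, sq_abs]
    have h2 : ((k.natAbs : ℝ)) ≤ (n : ℝ) := by exact_mod_cast hk
    have h3 : ((n : ℝ)) ≤ 2 ^ n := by exact_mod_cast (Nat.lt_two_pow_self (n := n)).le
    calc (k : ℝ) ^ 2 = ((k.natAbs : ℝ)) ^ 2 := h1.symm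
      _ ≤ ((2 : ℝ) ^ n) ^ 2 := by
          apply pow_le_pow_left₀ (Nat.cast_nonneg _) (h2.trans h3)
      _ = (4 : ℝ) ^ n := by rw [← pow_mul, mul_comm, pow_mul]; norm_num
  have hC1 := choose_le_four_pow n n
  have hC2 := choose_le_four_pow n (n + k.natAbs)
  have hnum : (k : ℝ) ^ 2 * (((2 * n).choose n : ℝ) * ((2 * n).choose (n + k.natAbs) : ℝ) * t ^ n)
      ≤ (4 : ℝ) ^ n * ((4 : ℝ) ^ n * (4 : ℝ) ^ n * t ^ n) := by
    have c1 : (0 : ℝ) ≤ ((2 * n).choose n : ℝ) := Nat.cast_nonneg _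
    have c2 : (0 : ℝ) ≤ ((2 * n).choose (n + k.natAbs) : ℝ) := Nat.cast_nonneg _
    have p4 : (0 : ℝ) ≤ (4 : ℝ) ^ n := by positivity
    nlinarith [mul_le_mul hC1 hC2 c2 p4, sq_nonneg (k : ℝ),
      mul_le_mul_of_nonneg_right (mul_le_mul hC1 hC2 c2 p4) htn,
      mul_le_mul_of_nonneg_right hk2 (mul_nonneg (mul_nonneg c1 c2) htn),
      mul_le_mul_of_nonneg_left (mul_le_mul_of_nonneg_right (mul_le_mul hC1 hC2 c2 p4) htn) p4]
  have hden : (0 : ℝ) < 8 ^ n * (n.factorial : ℝ) := by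
    apply mul_pos (by positivity)
    exact_mod_cast n.factorial_pos
  have h16 : (4 : ℝ) ^ n * 4 ^ n = 16 ^ n := by rw [← mul_pow]; norm_num
  have h64 : (16 : ℝ) ^ n * 4 ^ n = 64 ^ n := by rw [← mul_pow]; norm_num
  have h8 : (8 : ℝ) ^ n * 8 ^ n = 64 ^ n := by rw [← mul_pow]; norm_num
  calc (k : ℝ) ^ 2 * (((2 * n).choose n : ℝ) * ((2 * n).choose (n + k.natAbs) : ℝ) * t ^ n)
        / (8 ^ n * (n.factorial : ℝ))
      ≤ (4 : ℝ) ^ n * ((4 : ℝ) ^ n * (4 : ℝ) ^ n * t ^ n) / (8 ^ n * (n.factorial : ℝ)) :=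
        div_le_div_of_nonneg_right hnum hden.le
    _ = (8 * t) ^ n / (n.factorial : ℝ) := by
        rw [div_eq_div_iff hden.ne' (by exact_mod_cast n.factorial_pos : (0:ℝ) < (n.factorial : ℝ)).ne', mul_pow 8 t]
        linear_combination ((n.factorial : ℝ)) * (t ^ n * (4 : ℝ) ^ n * h16 + t ^ n * h64 - t ^ n * h8)

private lemma two_mul_add_one_le (m : ℕ) : 2 * m + 1 ≤ 3 ^ m := by
  induction m with
  | zero => simp
  | succ p ih =>
    calc 2 * (p + 1) + 1 ≤ 3 * (2 * p + 1) := by omega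
      _ ≤ 3 * 3 ^ p := by exact Nat.mul_le_mul_left 3 ih
      _ = 3 ^ (p + 1) := by rw [pow_succ]; ring

private lemma summable_uncurry (t : ℝ) (ht : 0 ≤ t) :
    Summable (Function.uncurry fun (k : ℤ) (n : ℕ) => Fterm t k n) := by
  rw [← summable_abs_iff]
  have key : Summable fun p : ℕ × ℤ => |Fterm t p.2 p.1| := by
    apply (summable_prod_of_nonneg (fun p => abs_nonneg _)).2
    constructor
    · intro n
      apply summable_of_ne_finset_zero (s := Finset.Icc (-(n : ℤ)) (n : ℤ))
      intro k hk
      rw [Fterm_vanish t n k hk, abs_zero]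
    · apply Summable.of_nonneg_of_le (fun n => tsum_nonneg fun k => abs_nonneg _) ?_
        (Real.summable_pow_div_factorial (24 * t))
      intro n
      rw [tsum_eq_sum (s := Finset.Icc (-(n : ℤ)) (n : ℤ))
        (fun k hk => by rw [Fterm_vanish t n k hk, abs_zero])]
      have hb : (0 : ℝ) ≤ (8 * t) ^ n / (n.factorial : ℝ) := by
        apply div_nonneg (pow_nonneg (by linarith) n) (Nat.cast_nonneg _)
      calc ∑ k ∈ Finset.Icc (-(n : ℤ)) (n : ℤ), |Fterm t k n|
          ≤ ∑ _k ∈ Finset.Icc (-(n : ℤ)) (n : ℤ), (8 * t) ^ n / (n.factorial : ℝ) := by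
            apply Finset.sum_le_sum
            intro k hk
            apply Fterm_abs_le t ht k n
            simp only [Finset.mem_Icc] at hk
            omega
        _ = ((Finset.Icc (-(n : ℤ)) (n : ℤ)).card : ℝ) * ((8 * t) ^ n / (n.factorial : ℝ)) := by
            rw [Finset.sum_const, nsmul_eq_mul]
        _ ≤ (3 : ℝ) ^ n * ((8 * t) ^ n / (n.factorial : ℝ)) := by
            apply mul_le_mul_of_nonneg_right ?_ hb
            have hcard : (Finset.Icc (-(n : ℤ)) (n : ℤ)).card = 2 * n + 1 := by
              rw [Int.card_Icc]; omega
            rw [hcard]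
            exact_mod_cast two_mul_add_one_le n
        _ = (24 * t) ^ n / (n.factorial : ℝ) := by
            rw [mul_pow 24 t, mul_pow 8 t,
              show (24 : ℝ) ^ n = 3 ^ n * 8 ^ n from by rw [← mul_pow]; norm_num]
            ring
  exact (key.prod_symm).congr fun p => rfl

theorem second_moment_purely_dissipative (t : ℝ) (ht : 0 ≤ t) :
    ∑' k : ℤ, (k : ℝ) ^ 2 *
        ∑' n : ℕ, (if k.natAbs ≤ n then
            ((-1 : ℝ) ^ (n + k.natAbs) / 8 ^ n) * ((2 * n).choose n : ℝ) *
              ((2 * n).choose (n + k.natAbs) : ℝ) * t ^ n / (n.factorial : ℝ)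
          else 0) = t / 2 := by
  have h1 : ∀ k : ℤ, ((k : ℝ) ^ 2 *
      ∑' n : ℕ, (if k.natAbs ≤ n then
          ((-1 : ℝ) ^ (n + k.natAbs) / 8 ^ n) * ((2 * n).choose n : ℝ) *
            ((2 * n).choose (n + k.natAbs) : ℝ) * t ^ n / (n.factorial : ℝ)
        else 0)) = ∑' n : ℕ, Fterm t k n := by
    intro k
    exact tsum_mul_left.symm
  calc ∑' k : ℤ, ((k : ℝ) ^ 2 *
      ∑' n : ℕ, (if k.natAbs ≤ n then
          ((-1 : ℝ) ^ (n + k.natAbs) / 8 ^ n) * ((2 * n).choose n : ℝ) *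
            ((2 * n).choose (n + k.natAbs) : ℝ) * t ^ n / (n.factorial : ℝ)
        else 0))
      = ∑' (k : ℤ) (n : ℕ), Fterm t k n := tsum_congr h1
    _ = ∑' (n : ℕ) (k : ℤ), Fterm t k n := (Summable.tsum_comm (summable_uncurry t ht)).symm
    _ = ∑' n : ℕ, (if n = 1 then t / 2 else 0) := tsum_congr (inner_eq t)
    _ = t / 2 := by
        rw [tsum_eq_single 1 (fun n hn => by simp [hn])]
        simp
end

section
/- Let Φ : M_n(ℂ) → M_n(ℂ) be a unital quantum channel (completely positive, trace preserving, Φ(I) = I), let σ be a density matrix and ρ = Φ(σ). Then the eigenvalue vector of ρ (in decreasing order) is majorized by that of σ; consequently Tr(ρ²) ≤ Tr(σ²). -/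
open Matrix
open scoped ComplexOrder

/-- A linear map on `n × n` complex matrices is completely positive if all its
ampliations `Φ ⊗ id_m` send positive semidefinite matrices to positive
semidefinite matrices. -/
def IsCompletelyPositive {n : ℕ}
    (Φ : Matrix (Fin n) (Fin n) ℂ →ₗ[ℂ] Matrix (Fin n) (Fin n) ℂ) : Prop :=
  ∀ (m : ℕ) (M : Matrix (Fin n × Fin m) (Fin n × Fin m) ℂ), M.PosSemidef →
    (Matrix.of fun p q : Fin n × Fin m =>
      Φ (Matrix.of fun i j : Fin n => M (i, p.2) (j, q.2)) p.1 q.1).PosSemidef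

namespace UnitalChannelAux

variable {n : ℕ}

lemma psd_apply_re_nonneg {M : Matrix (Fin n) (Fin n) ℂ} (hM : M.PosSemidef) (i : Fin n) :
    0 ≤ (M i i).re := by
  have h := hM.re_dotProduct_nonneg (Pi.single i 1)
  simpa [dotProduct, mulVec, Pi.single_apply, mul_ite, ite_mul, Finset.sum_ite_eq,
    Finset.sum_ite_eq'] using h

lemma cp_pos {Φ : Matrix (Fin n) (Fin n) ℂ →ₗ[ℂ] Matrix (Fin n) (Fin n) ℂ}
    (hCP : IsCompletelyPositive Φ) {A : Matrix (Fin n) (Fin n) ℂ}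
    (hA : A.PosSemidef) : (Φ A).PosSemidef := by
  classical
  let e : Fin n × Fin 1 ≃ Fin n := Equiv.prodUnique _ _
  have h1 := hCP 1 (A.submatrix e e) (hA.submatrix e)
  have h2 : (Matrix.of fun p q : Fin n × Fin 1 =>
      Φ (Matrix.of fun i j : Fin n => (A.submatrix e e) (i, p.2) (j, q.2)) p.1 q.1)
      = (Φ A).submatrix e e := by
    ext p q
    have hinner : (Matrix.of fun i j : Fin n => (A.submatrix e e) (i, p.2) (j, q.2)) = A := by
      ext i j
      simp [e, Equiv.prodUnique]
    rw [Matrix.of_apply, hinner]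
    rfl
  rw [h2] at h1
  exact (posSemidef_submatrix_equiv e).mp h1

lemma trace_eq_sum_eig {A : Matrix (Fin n) (Fin n) ℂ} (hA : A.IsHermitian) :
    A.trace = ∑ i, (hA.eigenvalues i : ℂ) := by
  conv_lhs => rw [hA.spectral_theorem, Unitary.conjStarAlgAut_apply]
  rw [Matrix.trace_mul_cycle, (Matrix.mem_unitaryGroup_iff').mp
    (hA.eigenvectorUnitary).2, Matrix.one_mul, Matrix.trace_diagonal]
  rfl

lemma trace_sq_eq_sum_eig_sq {A : Matrix (Fin n) (Fin n) ℂ} (hA : A.IsHermitian) :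
    ((A * A).trace).re = ∑ i, (hA.eigenvalues i) ^ 2 := by
  set U := (hA.eigenvectorUnitary : Matrix (Fin n) (Fin n) ℂ) with hU
  set D : Matrix (Fin n) (Fin n) ℂ := diagonal (RCLike.ofReal ∘ hA.eigenvalues) with hD
  have hUU : star U * U = 1 := (Matrix.mem_unitaryGroup_iff').mp (hA.eigenvectorUnitary).2
  have hsp : A = U * D * star U := hA.spectral_theorem
  have hsq : A * A = U * (D * D) * star U := by
    rw [hsp]
    simp only [Matrix.mul_assoc]
    rw [← Matrix.mul_assoc (star U) U, hUU, Matrix.one_mul]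
  rw [hsq, Matrix.trace_mul_cycle, hUU, Matrix.one_mul]
  rw [hD, diagonal_mul_diagonal, Matrix.trace_diagonal]
  rw [Complex.re_sum]
  refine Finset.sum_congr rfl fun i _ => ?_
  simp [pow_two]

lemma weight_sum_le (x c : Fin n → ℝ) (h0 : ∀ j, 0 ≤ c j) (h1 : ∀ j, c j ≤ 1)
    (k : ℕ) (hsum : ∑ j, c j = k) :
    ∃ t : Finset (Fin n), t.card = k ∧ ∑ j, c j * x j ≤ ∑ j ∈ t, x j := by
  classical
  have hk : k ≤ (Finset.univ : Finset (Fin n)).card := by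
    have hle : (k : ℝ) ≤ (Finset.univ : Finset (Fin n)).card := by
      rw [← hsum]
      calc ∑ j, c j ≤ ∑ _j : Fin n, (1 : ℝ) := Finset.sum_le_sum fun j _ => h1 j
        _ = (Finset.univ : Finset (Fin n)).card := by simp
    exact_mod_cast hle
  obtain ⟨t, ht, htmax⟩ := Finset.exists_max_image (Finset.univ.powersetCard k)
    (fun t => ∑ j ∈ t, x j) (Finset.powersetCard_nonempty.mpr hk)
  have htcard : t.card = k := (Finset.mem_powersetCard.mp ht).2
  refine ⟨t, htcard, ?_⟩
  rcases Nat.eq_zero_or_pos k with hk0 | hkpos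
  · have ht0 : t = ∅ := Finset.card_eq_zero.mp (htcard.trans hk0)
    have hc0 : ∀ j, c j = 0 := by
      intro j
      have h := (Finset.sum_eq_zero_iff_of_nonneg (fun j _ => h0 j)).mp
        (by rw [hsum, hk0]; simp)
      exact h j (Finset.mem_univ j)
    simp [ht0, hc0]
  · have htne : t.Nonempty := Finset.card_pos.mp (htcard ▸ hkpos)
    obtain ⟨j₀, hj₀t, hj₀min⟩ := Finset.exists_min_image t x htne
    set m := x j₀ with hm
    have hout : ∀ j ∉ t, x j ≤ m := by
      intro j hj
      have hjne : j ∉ t.erase j₀ := fun h => hj (Finset.mem_of_mem_erase h)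
      have hins : insert j (t.erase j₀) ∈ Finset.univ.powersetCard k := by
        rw [Finset.mem_powersetCard]
        refine ⟨Finset.subset_univ _, ?_⟩
        rw [Finset.card_insert_of_notMem hjne, Finset.card_erase_of_mem hj₀t, htcard]
        omega
      have hle := htmax _ hins
      rw [Finset.sum_insert hjne, Finset.sum_erase_eq_sub hj₀t] at hle
      linarith
    have h1t : ∑ j ∈ t, c j * x j ≤ ∑ j ∈ t, (x j + (c j - 1) * m) := by
      refine Finset.sum_le_sum fun j hj => ?_
      have hmx : m ≤ x j := hj₀min j hj
      have := mul_le_mul_of_nonpos_left hmx (by linarith [h1 j] : c j - 1 ≤ 0)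
      linarith
    have h2t : ∑ j ∈ tᶜ, c j * x j ≤ ∑ j ∈ tᶜ, c j * m :=
      Finset.sum_le_sum fun j hj =>
        mul_le_mul_of_nonneg_left (hout j (by simpa using hj)) (h0 j)
    have hsplit : ∑ j, c j * x j = ∑ j ∈ t, c j * x j + ∑ j ∈ tᶜ, c j * x j :=
      (Finset.sum_add_sum_compl t _).symm
    have hcsplit : ∑ j ∈ t, c j + ∑ j ∈ tᶜ, c j = (k : ℝ) := by
      rw [Finset.sum_add_sum_compl, hsum]
    have he1 : ∑ j ∈ t, (x j + (c j - 1) * m)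
        = ∑ j ∈ t, x j + ((∑ j ∈ t, c j) - k) * m := by
      rw [Finset.sum_add_distrib, ← Finset.sum_mul, Finset.sum_sub_distrib]
      simp [htcard]
    have he2 : ∑ j ∈ tᶜ, c j * m = (∑ j ∈ tᶜ, c j) * m := by
      rw [Finset.sum_mul]
    calc ∑ j, c j * x j = ∑ j ∈ t, c j * x j + ∑ j ∈ tᶜ, c j * x j := hsplit
      _ ≤ (∑ j ∈ t, x j + ((∑ j ∈ t, c j) - k) * m) + (∑ j ∈ tᶜ, c j) * m := by
          rw [← he1, ← he2]; exact add_le_add h1t h2t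
      _ = ∑ j ∈ t, x j + ((∑ j ∈ t, c j + ∑ j ∈ tᶜ, c j) - k) * m := by ring
      _ = ∑ j ∈ t, x j := by rw [hcsplit]; ring

lemma stdBasis_psd (j : Fin n) : (Matrix.single j j (1:ℂ)).PosSemidef := by
  have h : Matrix.single j j (1:ℂ) = diagonal (Pi.single j 1) := by
    ext a b
    simp [Matrix.single, diagonal, Pi.single_apply]
    aesop
  rw [h]
  exact posSemidef_diagonal_iff.mpr fun i => by
    rcases eq_or_ne i j with h | h <;> simp [Pi.single_apply, h]

lemma sum_stdBasis : ∑ j : Fin n, Matrix.single j j (1:ℂ) = 1 := by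
  ext a b
  simp only [Matrix.sum_apply, Matrix.single, Matrix.of_apply, Matrix.one_apply]
  rcases eq_or_ne a b with h | h
  · subst h; rw [Finset.sum_eq_single a] <;> simp +contextual
  · rw [if_neg h, Finset.sum_eq_zero]
    intro j _
    by_cases hja : j = a <;> by_cases hjb : j = b <;> simp_all

end UnitalChannelAux

open UnitalChannelAux

theorem unital_channel_majorizes {n : ℕ}
    (Φ : Matrix (Fin n) (Fin n) ℂ →ₗ[ℂ] Matrix (Fin n) (Fin n) ℂ)
    (hCP : IsCompletelyPositive Φ)
    (hTP : ∀ A : Matrix (Fin n) (Fin n) ℂ, (Φ A).trace = A.trace)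
    (hUnital : Φ 1 = 1)
    (σ : Matrix (Fin n) (Fin n) ℂ) (hσ : σ.PosSemidef) (hσtr : σ.trace = 1)
    (ρ : Matrix (Fin n) (Fin n) ℂ) (hρdef : ρ = Φ σ) (hρ : ρ.IsHermitian) :
    -- majorization λ(ρ) ≺ λ(σ): every partial sum of eigenvalues of ρ is
    -- dominated by the sum of equally many eigenvalues of σ, with equal totals
    ((∀ s : Finset (Fin n), ∃ t : Finset (Fin n), t.card = s.card ∧
        ∑ i ∈ s, hρ.eigenvalues i ≤ ∑ i ∈ t, hσ.isHermitian.eigenvalues i) ∧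
      ∑ i, hρ.eigenvalues i = ∑ i, hσ.isHermitian.eigenvalues i) ∧
    -- consequently purity does not increase
    ((ρ * ρ).trace).re ≤ ((σ * σ).trace).re := by
  classical
  set lr : Fin n → ℝ := hρ.eigenvalues with hlr
  set ls : Fin n → ℝ := hσ.isHermitian.eigenvalues with hls
  set U := (hρ.eigenvectorUnitary : Matrix (Fin n) (Fin n) ℂ) with hUdef
  set V := (hσ.isHermitian.eigenvectorUnitary : Matrix (Fin n) (Fin n) ℂ) with hVdef
  have hUU : star U * U = 1 := (Matrix.mem_unitaryGroup_iff').mp (hρ.eigenvectorUnitary).2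
  have hUU' : U * star U = 1 := (Matrix.mem_unitaryGroup_iff).mp (hρ.eigenvectorUnitary).2
  have hVV : star V * V = 1 :=
    (Matrix.mem_unitaryGroup_iff').mp (hσ.isHermitian.eigenvectorUnitary).2
  have hVV' : V * star V = 1 :=
    (Matrix.mem_unitaryGroup_iff).mp (hσ.isHermitian.eigenvectorUnitary).2
  set S : Fin n → Matrix (Fin n) (Fin n) ℂ :=
    fun j => V * Matrix.single j j 1 * star V with hSdef
  -- each S j is PSD
  have hS_psd : ∀ j, (S j).PosSemidef := fun j => by
    have := (stdBasis_psd (n := n) j).mul_mul_conjTranspose_same V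
    rwa [← Matrix.star_eq_conjTranspose] at this
  -- sum of S j is 1
  have hSsum : ∑ j, S j = 1 := by
    rw [hSdef]
    rw [← Finset.sum_mul, ← Finset.mul_sum, sum_stdBasis, Matrix.mul_one, hVV']
  -- spectral decomposition of σ
  have hσdecomp : σ = ∑ j, (ls j : ℂ) • S j := by
    conv_lhs => rw [hσ.isHermitian.spectral_theorem, Unitary.conjStarAlgAut_apply]
    have hdiag : diagonal (RCLike.ofReal ∘ ls)
        = ∑ j, (ls j : ℂ) • Matrix.single j j (1 : ℂ) := by
      ext a b
      rw [Matrix.sum_apply]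
      simp only [Matrix.smul_apply, Matrix.single, Matrix.of_apply, smul_eq_mul,
        diagonal_apply, Function.comp_apply, mul_ite, mul_one, mul_zero]
      rcases eq_or_ne a b with h | h
      · subst h
        rw [if_pos rfl, Finset.sum_eq_single a]
        · simp
        · intro j _ hj
          rw [if_neg]
          exact fun hc => hj hc.1
        · simp
      · rw [if_neg h, Finset.sum_eq_zero]
        intro j _
        rw [if_neg]
        exact fun hc => h (hc.1.symm.trans hc.2)
    rw [hdiag, Finset.mul_sum, Finset.sum_mul]
    refine Finset.sum_congr rfl fun j _ => ?_
    rw [Matrix.mul_smul, Matrix.smul_mul]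
  -- decomposition of ρ
  have hρdecomp : ρ = ∑ j, (ls j : ℂ) • Φ (S j) := by
    rw [hρdef, hσdecomp, map_sum]
    refine Finset.sum_congr rfl fun j _ => ?_
    exact Φ.map_smul _ _
  -- the doubly-stochastic-like matrix
  set D : Fin n → Fin n → ℝ := fun i j => ((star U * Φ (S j) * U) i i).re with hDdef
  have hD0 : ∀ i j, 0 ≤ D i j := by
    intro i j
    have hpsd : (star U * Φ (S j) * U).PosSemidef := by
      have := (cp_pos hCP (hS_psd j)).conjTranspose_mul_mul_same U
      rwa [← Matrix.star_eq_conjTranspose] at this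
    exact psd_apply_re_nonneg hpsd i
  -- row sums equal 1
  have hrow : ∀ i, ∑ j, D i j = 1 := by
    intro i
    have hsum1 : ∑ j, Φ (S j) = 1 := by rw [← map_sum, hSsum, hUnital]
    have hmat : ∑ j, star U * Φ (S j) * U = star U * (∑ j, Φ (S j)) * U := by
      rw [Finset.mul_sum, Finset.sum_mul]
    have : ∑ j, D i j = ((star U * (∑ j, Φ (S j)) * U) i i).re := by
      rw [hDdef, ← Complex.re_sum, ← Matrix.sum_apply, hmat]
    rw [this, hsum1, Matrix.mul_one, hUU]
    simp [Matrix.one_apply]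
  -- column sums equal 1
  have hcol : ∀ j, ∑ i, D i j = 1 := by
    intro j
    have htr : ∑ i, D i j = ((star U * Φ (S j) * U).trace).re := by
      simp only [hDdef, Matrix.trace, Matrix.diag, Complex.re_sum]
    rw [htr, Matrix.trace_mul_cycle, hUU', Matrix.one_mul, hTP]
    have h1 : (S j).trace = 1 := by
      rw [hSdef]
      simp only
      rw [Matrix.trace_mul_cycle, hVV, Matrix.one_mul]
      simp [Matrix.trace, Matrix.diag, Matrix.single]
    rw [h1]
    simp
  -- eigenvalue relation
  have hEig : ∀ i, lr i = ∑ j, D i j * ls j := by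
    intro i
    have hdiagρ : star U * ρ * U = diagonal (RCLike.ofReal ∘ lr) := by
      have h := hρ.conjStarAlgAut_star_eigenvectorUnitary
      rwa [Unitary.conjStarAlgAut_apply, Unitary.coe_star, star_star] at h
    have hentry : (star U * ρ * U) i i = (lr i : ℂ) := by
      rw [hdiagρ]
      simp [diagonal_apply_eq]
    have hexp : (star U * ρ * U) i i = ∑ j, (ls j : ℂ) * (star U * Φ (S j) * U) i i := by
      have : star U * ρ * U = ∑ j, (ls j : ℂ) • (star U * Φ (S j) * U) := by
        rw [hρdecomp, Finset.mul_sum, Finset.sum_mul]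
        refine Finset.sum_congr rfl fun j _ => ?_
        rw [Matrix.mul_smul, Matrix.smul_mul]
      rw [this, Matrix.sum_apply]
      refine Finset.sum_congr rfl fun j _ => ?_
      simp
    have := hentry.symm.trans hexp
    have hre := congrArg Complex.re this
    rw [Complex.ofReal_re, Complex.re_sum] at hre
    rw [hre]
    refine Finset.sum_congr rfl fun j _ => ?_
    rw [mul_comm (D i j)]
    simp [hDdef]
  refine ⟨⟨?_, ?_⟩, ?_⟩
  · -- majorization
    intro s
    set c : Fin n → ℝ := fun j => ∑ i ∈ s, D i j with hc
    have hc0 : ∀ j, 0 ≤ c j := fun j => Finset.sum_nonneg fun i _ => hD0 i j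
    have hc1 : ∀ j, c j ≤ 1 := by
      intro j
      calc c j ≤ ∑ i, D i j := Finset.sum_le_sum_of_subset_of_nonneg
            (Finset.subset_univ s) (fun i _ _ => hD0 i j)
        _ = 1 := hcol j
    have hcsum : ∑ j, c j = (s.card : ℝ) := by
      rw [hc]
      rw [Finset.sum_comm]
      rw [Finset.sum_congr rfl fun i _ => hrow i]
      simp
    obtain ⟨t, htc, hle⟩ := weight_sum_le ls c hc0 hc1 s.card hcsum
    refine ⟨t, htc, ?_⟩
    have : ∑ i ∈ s, lr i = ∑ j, c j * ls j := by
      rw [Finset.sum_congr rfl fun i _ => hEig i, Finset.sum_comm]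
      refine Finset.sum_congr rfl fun j _ => ?_
      rw [hc, Finset.sum_mul]
    rw [this]
    exact hle
  · -- total sums equal
    have h1 : (↑(∑ i, lr i) : ℂ) = ↑(∑ i, ls i) := by
      push_cast
      rw [← trace_eq_sum_eig hρ, ← trace_eq_sum_eig hσ.isHermitian, hρdef, hTP]
    exact_mod_cast h1
  · -- purity
    rw [trace_sq_eq_sum_eig_sq hρ, trace_sq_eq_sum_eig_sq hσ.isHermitian]
    have hper : ∀ i, (lr i) ^ 2 ≤ ∑ j, D i j * (ls j) ^ 2 := by
      intro i
      have hcs := Finset.sum_sq_le_sum_mul_sum_of_sq_eq_mul Finset.univ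
        (r := fun j => D i j * ls j) (f := fun j => D i j) (g := fun j => D i j * (ls j) ^ 2)
        (fun j _ => hD0 i j) (fun j _ => mul_nonneg (hD0 i j) (sq_nonneg _))
        (fun j _ => by ring)
      rw [hrow i, one_mul] at hcs
      rw [hEig i]
      exact hcs
    calc ∑ i, (lr i) ^ 2 ≤ ∑ i, ∑ j, D i j * (ls j) ^ 2 :=
          Finset.sum_le_sum fun i _ => hper i
      _ = ∑ j, (∑ i, D i j) * (ls j) ^ 2 := by
          rw [Finset.sum_comm]
          exact Finset.sum_congr rfl fun j _ => (Finset.sum_mul _ _ _).symm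
      _ = ∑ j, (ls j) ^ 2 := by
          refine Finset.sum_congr rfl fun j _ => ?_
          rw [hcol j, one_mul]
end
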